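/- arXiv:2511.15955 — 4 statements merged into one kernel-verified Lean document; each statement's English description precedes it below -/
import Mathlib

section
/- Let n ≥ 2 and let K and K_i (i ∈ ℕ) be compact convex subsets of Euclidean space ℝⁿ, each with nonempty interior. If the Hausdorff distance between K_i and K tends to 0 as i → ∞, then the (n−1)-dimensional Hausdorff measures of the boundaries converge: μH^{n−1}(frontier K_i) → μH^{n−1}(frontier K). -/
open MeasureTheory Metric Filter RealInnerProductSpace
open scoped NNReal ENNReal Pointwise

variable {E : Type*} [NormedAddCommGroup E] [InnerProductSpace ℝ E]

theorem exists_nearest {K : Set E} (hcpt : IsCompact K) (hconv : Convex ℝ K) (hne : K.Nonempty)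
    (u : E) : ∃ v ∈ K, ∀ w ∈ K, ⟪u - v, w - v⟫ ≤ 0 := by
  obtain ⟨v, hv, hmin⟩ := exists_norm_eq_iInf_of_complete_convex hne hcpt.isComplete hconv u
  exact ⟨v, hv, fun w hw => (norm_eq_iInf_iff_real_inner_le_zero hconv hv).mp hmin w hw⟩

noncomputable def nproj {K : Set E} (hcpt : IsCompact K) (hconv : Convex ℝ K) (hne : K.Nonempty)
    (u : E) : E := (exists_nearest hcpt hconv hne u).choose

theorem nproj_mem {K : Set E} (hcpt : IsCompact K) (hconv : Convex ℝ K) (hne : K.Nonempty)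
    (u : E) : nproj hcpt hconv hne u ∈ K := (exists_nearest hcpt hconv hne u).choose_spec.1

theorem nproj_inner {K : Set E} (hcpt : IsCompact K) (hconv : Convex ℝ K) (hne : K.Nonempty)
    (u : E) : ∀ w ∈ K, ⟪u - nproj hcpt hconv hne u, w - nproj hcpt hconv hne u⟫ ≤ 0 :=
  (exists_nearest hcpt hconv hne u).choose_spec.2

theorem nearest_unique {K : Set E} {u v v' : E} (hv : v ∈ K) (hv' : v' ∈ K)
    (h : ∀ w ∈ K, ⟪u - v, w - v⟫ ≤ 0) (h' : ∀ w ∈ K, ⟪u - v', w - v'⟫ ≤ 0) : v = v' := by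
  have h1 := h v' hv'
  have h2 := h' v hv
  have key : ⟪v - v', v - v'⟫ ≤ 0 := by
    have e : ⟪v - v', v - v'⟫ = ⟪u - v, v' - v⟫ + ⟪u - v', v - v'⟫ := by
      simp only [inner_sub_left, inner_sub_right]
      simp only [real_inner_comm u v, real_inner_comm u v', real_inner_comm v v']
      ring
    linarith
  have : v - v' = 0 := by
    have := real_inner_self_nonneg (x := v - v')
    have hz : ⟪v - v', v - v'⟫ = 0 := le_antisymm key this
    exact inner_self_eq_zero.mp hz
  exact sub_eq_zero.mp this

theorem nproj_lipschitz {K : Set E} (hcpt : IsCompact K) (hconv : Convex ℝ K) (hne : K.Nonempty) :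
    LipschitzWith 1 (nproj hcpt hconv hne) := by
  refine LipschitzWith.of_dist_le_mul fun u₁ u₂ => ?_
  set v₁ := nproj hcpt hconv hne u₁ with hv₁
  set v₂ := nproj hcpt hconv hne u₂ with hv₂
  have h1 := nproj_inner hcpt hconv hne u₁ v₂ (nproj_mem hcpt hconv hne u₂)
  have h2 := nproj_inner hcpt hconv hne u₂ v₁ (nproj_mem hcpt hconv hne u₁)
  have key : ⟪v₁ - v₂, v₁ - v₂⟫ ≤ ⟪u₁ - u₂, v₁ - v₂⟫ := by
    have e : ⟪u₁ - u₂, v₁ - v₂⟫ - ⟪v₁ - v₂, v₁ - v₂⟫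
        = -⟪u₁ - v₁, v₂ - v₁⟫ - ⟪u₂ - v₂, v₁ - v₂⟫ := by
      simp only [inner_sub_left, inner_sub_right]
      simp only [real_inner_comm u₁ v₁, real_inner_comm u₁ v₂, real_inner_comm u₂ v₁,
        real_inner_comm u₂ v₂, real_inner_comm v₁ v₂, real_inner_comm u₁ u₂]
      ring
    linarith
  have cs : ⟪u₁ - u₂, v₁ - v₂⟫ ≤ ‖u₁ - u₂‖ * ‖v₁ - v₂‖ := real_inner_le_norm _ _
  have hself : ⟪v₁ - v₂, v₁ - v₂⟫ = ‖v₁ - v₂‖ * ‖v₁ - v₂‖ := real_inner_self_eq_norm_mul_norm _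
  rw [NNReal.coe_one, one_mul, dist_eq_norm, dist_eq_norm]
  nlinarith [norm_nonneg (v₁ - v₂), norm_nonneg (u₁ - u₂)]

theorem exists_normal [CompleteSpace E] {K : Set E} (hconv : Convex ℝ K) (hcl : IsClosed K)
    (hint : (interior K).Nonempty) {x : E} (hx : x ∈ frontier K) :
    ∃ ν : E, ν ≠ 0 ∧ ∀ z ∈ K, ⟪ν, z - x⟫ ≤ 0 := by
  obtain ⟨x₀, hx₀⟩ := hint
  obtain ⟨f, hf⟩ := geometric_hahn_banach_open_point hconv.interior isOpen_interior hx.2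
  have fK : ∀ z ∈ K, f z ≤ f x := by
    intro z hz
    have cont : Continuous fun t : ℝ => f (t • x₀ + (1 - t) • z) := by fun_prop
    have lim : Tendsto (fun t : ℝ => f (t • x₀ + (1 - t) • z)) (nhdsWithin 0 (Set.Ioi 0))
        (nhds (f z)) := by
      have h0 := cont.tendsto 0
      simp only [zero_smul, zero_add, sub_zero, one_smul] at h0
      exact h0.mono_left nhdsWithin_le_nhds
    refine le_of_tendsto lim ?_
    filter_upwards [Ioo_mem_nhdsGT_of_mem (Set.mem_Ico.mpr ⟨le_refl (0:ℝ), zero_lt_one⟩)]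
      with t ht
    exact (hf _ (hconv.combo_interior_closure_mem_interior hx₀ (subset_closure hz) ht.1
      (by linarith [ht.2]) (by ring))).le
  refine ⟨(InnerProductSpace.toDual ℝ E).symm f, ?_, ?_⟩
  · intro h0
    have h1 : f x₀ = 0 := by
      have := InnerProductSpace.toDual_symm_apply (y := f) (x := x₀)
      rw [h0] at this; simpa using this.symm
    have h2 : f x = 0 := by
      have := InnerProductSpace.toDual_symm_apply (y := f) (x := x)
      rw [h0] at this; simpa using this.symm
    have := hf x₀ hx₀
    rw [h1, h2] at this; exact lt_irrefl _ this
  · intro z hz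
    rw [InnerProductSpace.toDual_symm_apply, map_sub]
    linarith [fK z hz]

theorem hausdorffMeasure_frontier_mono [CompleteSpace E] [MeasurableSpace E] [BorelSpace E]
    {d : ℝ} (hd : 0 ≤ d) {K L : Set E}
    (hKcpt : IsCompact K) (hKconv : Convex ℝ K) (hKint : (interior K).Nonempty)
    (hLcpt : IsCompact L) (hKL : K ⊆ L) :
    μH[d] (frontier K) ≤ μH[d] (frontier L) := by
  have hKne : K.Nonempty := ⟨hKint.choose, interior_subset hKint.choose_spec⟩
  have hsub : frontier K ⊆ nproj hKcpt hKconv hKne '' frontier L := by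
    rintro x hx
    obtain ⟨ν, hν0, hν⟩ := exists_normal hKconv hKcpt.isClosed hKint hx
    have hνn : 0 < ‖ν‖ := norm_pos_iff.mpr hν0
    have hxK : x ∈ K := hKcpt.isClosed.frontier_subset hx
    set S := {t : ℝ | 0 ≤ t ∧ x + t • ν ∈ L} with hSdef
    have hS0 : (0:ℝ) ∈ S := ⟨le_refl 0, by simpa using hKL hxK⟩
    obtain ⟨R, hR⟩ := hLcpt.isBounded.subset_closedBall 0
    have hub : ∀ t ∈ S, t ≤ (R + ‖x‖) / ‖ν‖ := by
      intro t ht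
      have h1 : ‖x + t • ν‖ ≤ R := by simpa [dist_eq_norm] using hR ht.2
      have h2 : ‖t • ν‖ ≤ ‖x + t • ν‖ + ‖x‖ := by
        have := norm_sub_le (x + t • ν) x
        simpa using this
      rw [norm_smul, Real.norm_eq_abs, abs_of_nonneg ht.1] at h2
      rw [le_div_iff₀ hνn]
      linarith
    have hbdd : BddAbove S := ⟨(R + ‖x‖) / ‖ν‖, hub⟩
    have hScl : IsClosed S := by
      have : S = Set.Ici (0:ℝ) ∩ (fun t : ℝ => x + t • ν) ⁻¹' L := rfl
      rw [this]
      exact isClosed_Ici.inter (hLcpt.isClosed.preimage (by fun_prop))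
    have hScpt : IsCompact S :=
      isCompact_Icc.of_isClosed_subset hScl
        (fun t ht => Set.mem_Icc.mpr ⟨ht.1, hub t ht⟩)
    set T := sSup S with hTdef
    have hTS : T ∈ S := hScpt.sSup_mem ⟨0, hS0⟩
    have hyfr : x + T • ν ∈ frontier L := by
      rw [hLcpt.isClosed.frontier_eq]
      refine ⟨hTS.2, fun hint' => ?_⟩
      obtain ⟨ε, hε, hball⟩ := Metric.isOpen_iff.mp isOpen_interior _ hint'
      have ht'S : T + ε / (2 * ‖ν‖) ∈ S := by
        refine ⟨add_nonneg hTS.1 (by positivity), interior_subset (hball ?_)⟩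
        have : dist (x + (T + ε / (2 * ‖ν‖)) • ν) (x + T • ν) = ε / 2 := by
          rw [dist_eq_norm]
          have : x + (T + ε / (2 * ‖ν‖)) • ν - (x + T • ν) = (ε / (2 * ‖ν‖)) • ν := by
            rw [add_smul]; abel
          rw [this, norm_smul, Real.norm_eq_abs, abs_of_nonneg (by positivity)]
          field_simp
        rw [Metric.mem_ball, this]; linarith
      have := le_csSup hbdd ht'S
      have hpos : 0 < ε / (2 * ‖ν‖) := by positivity
      linarith
    have hPy : nproj hKcpt hKconv hKne (x + T • ν) = x := by
      refine nearest_unique (nproj_mem hKcpt hKconv hKne _) hxK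
        (nproj_inner hKcpt hKconv hKne _) ?_
      intro w hw
      have : x + T • ν - x = T • ν := by abel
      rw [this, real_inner_smul_left]
      exact mul_nonpos_iff.mpr (Or.inl ⟨hTS.1, hν w hw⟩)
    exact ⟨x + T • ν, hyfr, hPy⟩
  calc μH[d] (frontier K) ≤ μH[d] (nproj hKcpt hKconv hKne '' frontier L) := measure_mono hsub
    _ ≤ (1 : ℝ≥0) ^ d * μH[d] (frontier L) :=
        (nproj_lipschitz hKcpt hKconv hKne).hausdorffMeasure_image_le hd _
    _ = μH[d] (frontier L) := by simp

/-- If `K` contains a ball of radius `r` and every point of `K` is `δ`-close to the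
closed convex set `C`, then `C` contains the concentric ball of radius `r - δ`. -/
theorem closedBall_subset_of_approx [CompleteSpace E] {K C : Set E} {x₀ : E} {r δ : ℝ}
    (hC : Convex ℝ C) (hCcl : IsClosed C) (hCne : C.Nonempty)
    (hball : closedBall x₀ r ⊆ K) (happrox : ∀ x ∈ K, ∃ y ∈ C, dist x y ≤ δ)
    (hδ : 0 ≤ δ) : closedBall x₀ (r - δ) ⊆ C := by
  intro z hz
  by_contra hzC
  have hzr : dist z x₀ ≤ r - δ := mem_closedBall.mp hz
  have hr : 0 ≤ r := le_trans (by linarith [dist_nonneg (x := z) (y := x₀)]) (le_refl _)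
  obtain ⟨f, u, hfu, huz⟩ := geometric_hahn_banach_closed_point hC hCcl hzC
  set ν := (InnerProductSpace.toDual ℝ E).symm f with hν
  have hfeq : ∀ w : E, f w = ⟪ν, w⟫ := fun w =>
    (InnerProductSpace.toDual_symm_apply (y := f) (x := w)).symm
  have hν0 : ν ≠ 0 := by
    intro h0
    obtain ⟨b, hb⟩ := hCne
    have h1 : f b = 0 := by rw [hfeq, h0]; simp
    have h2 : f z = 0 := by rw [hfeq, h0]; simp
    have := hfu b hb
    rw [h1] at this; rw [h2] at huz; linarith
  have hνn : 0 < ‖ν‖ := norm_pos_iff.mpr hν0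
  set p := x₀ + (r / ‖ν‖) • ν with hp
  have hpK : p ∈ K := by
    refine hball ?_
    have : dist p x₀ = r := by
      rw [dist_eq_norm]
      have : p - x₀ = (r / ‖ν‖) • ν := by rw [hp]; abel
      rw [this, norm_smul, Real.norm_eq_abs, abs_of_nonneg (by positivity)]
      field_simp
    exact mem_closedBall.mpr this.le
  obtain ⟨y, hyC, hdy⟩ := happrox p hpK
  -- f p = f x₀ + r ‖ν‖
  have hfp : f p = f x₀ + r * ‖ν‖ := by
    rw [hp, map_add, f.map_smul, smul_eq_mul, hfeq ν, real_inner_self_eq_norm_mul_norm]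
    field_simp
  -- f p ≤ f y + ‖ν‖ δ
  have hppy : f p - f y ≤ ‖ν‖ * δ := by
    have h1 : f p - f y = ⟪ν, p - y⟫ := by rw [hfeq p, hfeq y, ← inner_sub_right]
    have h2 : ⟪ν, p - y⟫ ≤ ‖ν‖ * ‖p - y‖ := real_inner_le_norm _ _
    have h3 : ‖p - y‖ ≤ δ := by rw [← dist_eq_norm]; exact hdy
    rw [h1]
    calc ⟪ν, p - y⟫ ≤ ‖ν‖ * ‖p - y‖ := h2
      _ ≤ ‖ν‖ * δ := by nlinarith
  have hfy : f y < u := hfu y hyC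
  -- f z ≤ f x₀ + ‖ν‖ (r - δ)
  have hfz : f z ≤ f x₀ + ‖ν‖ * (r - δ) := by
    have h1 : f z - f x₀ = ⟪ν, z - x₀⟫ := by rw [hfeq z, hfeq x₀, ← inner_sub_right]
    have h2 : ⟪ν, z - x₀⟫ ≤ ‖ν‖ * ‖z - x₀‖ := real_inner_le_norm _ _
    have h3 : ‖z - x₀‖ ≤ r - δ := by rw [← dist_eq_norm]; exact hzr
    nlinarith
  nlinarith

/-- If the convex set `C` contains `closedBall x₀ s` and every point of `K` is `δ`-close
to `C`, then the homothety of ratio `s / (s + δ)` about `x₀` maps `K` into `C`. -/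
theorem homothety_mem_of_approx {K C : Set E} {x₀ : E} {s δ : ℝ}
    (hC : Convex ℝ C) (hball : closedBall x₀ s ⊆ C)
    (happrox : ∀ x ∈ K, ∃ y ∈ C, dist x y ≤ δ) (hs : 0 < s) (hδ : 0 ≤ δ) :
    ∀ x ∈ K, x₀ + (s / (s + δ)) • (x - x₀) ∈ C := by
  intro x hx
  obtain ⟨y, hyC, hdy⟩ := happrox x hx
  rcases eq_or_lt_of_le hδ with hδ0 | hδpos
  · have hxy : x = y := by
      have : dist x y ≤ 0 := by rw [← hδ0] at hdy; exact hdy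
      exact dist_le_zero.mp this
    subst hxy
    rw [← hδ0, add_zero, div_self hs.ne', one_smul]
    have : x₀ + (x - x₀) = x := by abel
    rw [this]; exact hyC
  · set lam := s / (s + δ) with hlam
    have hl0 : 0 ≤ lam := by positivity
    have hl1 : lam ≤ 1 := by
      rw [hlam, div_le_one (by linarith)]; linarith
    set w := x₀ + (s / δ) • (x - y) with hw
    have hwC : w ∈ C := by
      refine hball (mem_closedBall.mpr ?_)
      rw [dist_eq_norm]
      have : w - x₀ = (s / δ) • (x - y) := by rw [hw]; abel
      rw [this, norm_smul, Real.norm_eq_abs, abs_of_nonneg (by positivity)]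
      have : ‖x - y‖ ≤ δ := by rw [← dist_eq_norm]; exact hdy
      calc s / δ * ‖x - y‖ ≤ s / δ * δ := by
            apply mul_le_mul_of_nonneg_left this (by positivity)
        _ = s := by field_simp
    have hmem := hC hyC hwC (a := lam) (b := 1 - lam) hl0 (by linarith) (by ring)
    have e : lam • y + (1 - lam) • w = x₀ + lam • (x - x₀) := by
      rw [hw, hlam]
      match_scalars <;> field_simp <;> ring
    rw [← e]; exact hmem

section Homothety

variable [MeasurableSpace E] [BorelSpace E]

theorem homothety_eq_homeomorph {c : ℝ} (hc : c ≠ 0) (x₀ : E) :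
    (fun x : E => x₀ + c • (x - x₀))
      = (Homeomorph.smulOfNeZero c hc).trans (Homeomorph.addLeft (x₀ - c • x₀)) := by
  funext x
  simp only [Homeomorph.trans_apply, Homeomorph.smulOfNeZero_apply, Homeomorph.coe_addLeft,
    Units.smul_mk0]
  rw [smul_sub]; abel

theorem homothety_image_eq (c : ℝ) (x₀ : E) (A : Set E) :
    (fun x : E => x₀ + c • (x - x₀)) '' A = (x₀ - c • x₀) +ᵥ (c • A) := by
  rw [show (fun x : E => x₀ + c • (x - x₀)) = (fun y => (x₀ - c • x₀) +ᵥ y) ∘ (fun x => c • x)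
    from by funext x; simp only [Function.comp_apply, vadd_eq_add]; rw [smul_sub]; abel]
  rw [Set.image_comp, Set.image_smul, Set.image_vadd]

theorem homothety_interior_nonempty {c : ℝ} (hc : c ≠ 0) (x₀ : E) {A : Set E}
    (h : (interior A).Nonempty) :
    (interior ((fun x : E => x₀ + c • (x - x₀)) '' A)).Nonempty := by
  rw [homothety_eq_homeomorph hc x₀]
  set φ := (Homeomorph.smulOfNeZero c hc).trans (Homeomorph.addLeft (x₀ - c • x₀))
  rw [← φ.image_interior]
  exact h.image _

theorem homothety_convex {c : ℝ} (x₀ : E) {A : Set E} (h : Convex ℝ A) :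
    Convex ℝ ((fun x : E => x₀ + c • (x - x₀)) '' A) := by
  rw [homothety_image_eq, ← Set.image_vadd]
  exact (h.smul c).translate _

theorem homothety_compact {c : ℝ} (x₀ : E) {A : Set E} (h : IsCompact A) :
    IsCompact ((fun x : E => x₀ + c • (x - x₀)) '' A) :=
  h.image (by fun_prop)

theorem homothety_inv_cancel {c : ℝ} (hc : c ≠ 0) (x₀ x : E) :
    x₀ + c • ((x₀ + c⁻¹ • (x - x₀)) - x₀) = x := by
  have : (x₀ + c⁻¹ • (x - x₀)) - x₀ = c⁻¹ • (x - x₀) := by abel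
  rw [this, smul_smul, mul_inv_cancel₀ hc, one_smul]; abel

theorem hausdorffMeasure_frontier_homothety {c : ℝ} (hc : c ≠ 0) {d : ℝ} (hd : 0 ≤ d)
    (x₀ : E) (A : Set E) :
    μH[d] (frontier ((fun x : E => x₀ + c • (x - x₀)) '' A))
      = (‖c‖₊ : ℝ≥0∞) ^ d * μH[d] (frontier A) := by
  rw [homothety_eq_homeomorph hc x₀]
  set φ := (Homeomorph.smulOfNeZero c hc).trans (Homeomorph.addLeft (x₀ - c • x₀))
  rw [← φ.image_frontier]
  have himg : φ '' frontier A = (x₀ - c • x₀) +ᵥ (c • frontier A) := by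
    rw [← homothety_image_eq c x₀ (frontier A), homothety_eq_homeomorph hc x₀]
  rw [himg, MeasureTheory.hausdorffMeasure_vadd _ (Or.inl hd),
    Measure.hausdorffMeasure_smul₀ hd hc]
  simp [ENNReal.smul_def, ENNReal.coe_rpow_of_nonneg _ hd]

end Homothety

/-- Continuity of surface area (the `(n-1)`-dimensional Hausdorff measure of the
boundary) on compact convex bodies in `ℝⁿ` with respect to Hausdorff distance. -/
theorem surfaceArea_continuous_of_hausdorffDist_tendsto_zero
    (n : ℕ) (hn : 2 ≤ n)
    (K : Set (EuclideanSpace ℝ (Fin n))) (Ki : ℕ → Set (EuclideanSpace ℝ (Fin n)))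
    (hK_cpt : IsCompact K) (hK_conv : Convex ℝ K) (hK_int : (interior K).Nonempty)
    (hKi_cpt : ∀ i, IsCompact (Ki i)) (hKi_conv : ∀ i, Convex ℝ (Ki i))
    (hKi_int : ∀ i, (interior (Ki i)).Nonempty)
    (hconv : Tendsto (fun i => hausdorffDist (Ki i) K) atTop (nhds 0)) :
    Tendsto (fun i => μH[(n : ℝ) - 1] (frontier (Ki i))) atTop
      (nhds (μH[(n : ℝ) - 1] (frontier K))) := by
  set d : ℝ := (n : ℝ) - 1 with hd_def
  have hd : 0 ≤ d := by
    have : (2 : ℝ) ≤ n := by exact_mod_cast hn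
    rw [hd_def]; linarith
  obtain ⟨x₀, hx₀⟩ := hK_int
  obtain ⟨ε, hε, hball⟩ := Metric.isOpen_iff.mp isOpen_interior _ hx₀
  set r := ε / 2 with hr_def
  have hr : 0 < r := by positivity
  have hballK : closedBall x₀ r ⊆ K := fun z hz =>
    interior_subset (hball (lt_of_le_of_lt (mem_closedBall.mp hz) (by rw [hr_def]; linarith)))
  have hKne : K.Nonempty := ⟨x₀, interior_subset hx₀⟩
  have hKine : ∀ i, (Ki i).Nonempty := fun i =>
    ⟨(hKi_int i).choose, interior_subset (hKi_int i).choose_spec⟩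
  set δ := fun i => hausdorffDist (Ki i) K with hδ_def
  have hδ0 : ∀ i, 0 ≤ δ i := fun i => hausdorffDist_nonneg
  have hfin : ∀ i, EMetric.hausdorffEdist (Ki i) K ≠ ⊤ := fun i =>
    hausdorffEdist_ne_top_of_nonempty_of_bounded (hKine i) hKne (hKi_cpt i).isBounded
      hK_cpt.isBounded
  have approx1 : ∀ i, ∀ x ∈ Ki i, ∃ y ∈ K, dist x y ≤ δ i := by
    intro i x hx
    obtain ⟨y, hy, hyd⟩ := hK_cpt.exists_infDist_eq_dist hKne x
    exact ⟨y, hy, by rw [← hyd]; exact infDist_le_hausdorffDist_of_mem hx (hfin i)⟩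
  have approx2 : ∀ i, ∀ x ∈ K, ∃ y ∈ Ki i, dist x y ≤ δ i := by
    intro i x hx
    obtain ⟨y, hy, hyd⟩ := (hKi_cpt i).exists_infDist_eq_dist (hKine i) x
    refine ⟨y, hy, ?_⟩
    rw [← hyd]
    have h := infDist_le_hausdorffDist_of_mem hx
      (by rw [EMetric.hausdorffEdist_comm]; exact hfin i)
    rwa [hausdorffDist_comm] at h
  set lam := fun i => (r - δ i) / r with hlam_def
  set mu := fun i => (r + δ i) / r with hmu_def
  set a := μH[d] (frontier K) with ha_def
  have hev : ∀ᶠ i in atTop, δ i < r := hconv.eventually_lt_const hr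
  have lower : ∀ᶠ i in atTop, (‖lam i‖₊ : ℝ≥0∞) ^ d * a ≤ μH[d] (frontier (Ki i)) := by
    filter_upwards [hev] with i hi
    have hlam_pos : 0 < lam i := div_pos (by linarith) hr
    have hball_i : closedBall x₀ (r - δ i) ⊆ Ki i :=
      closedBall_subset_of_approx (hKi_conv i) (hKi_cpt i).isClosed (hKine i) hballK
        (approx2 i) (hδ0 i)
    have hsub : (fun x => x₀ + lam i • (x - x₀)) '' K ⊆ Ki i := by
      rintro _ ⟨x, hx, rfl⟩
      have h2 := homothety_mem_of_approx (hKi_conv i) hball_i (approx2 i)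
        (by linarith : (0:ℝ) < r - δ i) (hδ0 i) x hx
      have he : (r - δ i) + δ i = r := by ring
      rw [he] at h2
      exact h2
    have hmono := hausdorffMeasure_frontier_mono hd (homothety_compact x₀ hK_cpt)
      (homothety_convex x₀ hK_conv) (homothety_interior_nonempty hlam_pos.ne' x₀ ⟨x₀, hx₀⟩)
      (hKi_cpt i) hsub
    rwa [hausdorffMeasure_frontier_homothety hlam_pos.ne' hd x₀ K] at hmono
  have upper : ∀ᶠ i in atTop, μH[d] (frontier (Ki i)) ≤ (‖mu i‖₊ : ℝ≥0∞) ^ d * a := by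
    filter_upwards [hev] with i hi
    have hmu_pos : 0 < mu i := div_pos (by linarith [hδ0 i]) hr
    have hsub : Ki i ⊆ (fun x => x₀ + mu i • (x - x₀)) '' K := by
      intro x hx
      have h2 := homothety_mem_of_approx hK_conv hballK (approx1 i) hr (hδ0 i) x hx
      refine ⟨x₀ + (r / (r + δ i)) • (x - x₀), h2, ?_⟩
      have hinv : r / (r + δ i) = (mu i)⁻¹ := by rw [hmu_def]; rw [inv_div]
      rw [hinv]
      exact homothety_inv_cancel hmu_pos.ne' x₀ x
    exact (hausdorffMeasure_frontier_mono hd (hKi_cpt i) (hKi_conv i) (hKi_int i)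
      (homothety_compact x₀ hK_cpt) hsub).trans_eq
      (hausdorffMeasure_frontier_homothety hmu_pos.ne' hd x₀ K)
  have coef_t : ∀ {f : ℕ → ℝ}, Tendsto f atTop (nhds 1) →
      Tendsto (fun i => (‖f i‖₊ : ℝ≥0∞) ^ d * a) atTop (nhds a) := by
    intro f hf
    have h1 : Tendsto (fun i => ‖f i‖₊) atTop (nhds 1) := by
      have hc : Continuous fun x : ℝ => ‖x‖₊ := continuous_nnnorm
      have := (hc.tendsto 1).comp hf
      simpa [Function.comp_def] using this
    have h2 : Tendsto (fun i => (‖f i‖₊ : ℝ≥0∞) ^ d) atTop (nhds 1) := by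
      have h3 := ((NNReal.continuous_rpow_const hd).tendsto 1).comp h1
      rw [NNReal.one_rpow] at h3
      have h4 := (ENNReal.tendsto_coe (f := atTop)).mpr h3
      simpa [ENNReal.coe_rpow_of_nonneg _ hd] using h4
    have := ENNReal.Tendsto.mul_const h2 (b := a) (Or.inl one_ne_zero)
    simpa using this
  have hlam_t : Tendsto lam atTop (nhds 1) := by
    have := (hconv.const_sub r).div_const r
    simpa [div_self hr.ne'] using this
  have hmu_t : Tendsto mu atTop (nhds 1) := by
    have := (hconv.const_add r).div_const r
    simpa [div_self hr.ne'] using this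
  exact tendsto_of_tendsto_of_tendsto_of_le_of_le' (coef_t hlam_t) (coef_t hmu_t) lower upper
end

section
/- Let n ≥ 2 and let K be a compact convex subset of Euclidean space ℝⁿ with nonempty interior. For ε ≥ 0 let K^ε denote the closed ε-thickening of K (the set of points at distance at most ε from K). Then μH^{n−1}(frontier K^ε) tends to μH^{n−1}(frontier K) as ε → 0⁺, where μH^{n−1} is the (n−1)-dimensional Hausdorff measure. -/
set_option maxHeartbeats 1000000


open MeasureTheory Metric Filter

open scoped RealInnerProductSpace Pointwise ENNReal NNReal

section Aux

variable {n : ℕ}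

/-- Monotonicity of surface area for nested convex bodies, via the 1-Lipschitz metric
projection onto the inner body, which maps the outer frontier onto the inner frontier. -/
lemma surface_mono {d : ℝ} (hd : 0 ≤ d)
    {K L : Set (EuclideanSpace ℝ (Fin n))}
    (hKc : IsCompact K) (hKv : Convex ℝ K) (hKi : (interior K).Nonempty)
    (hLc : IsCompact L) (hKL : K ⊆ L) :
    μH[d] (frontier K) ≤ μH[d] (frontier L) := by
  classical
  obtain ⟨a, ha⟩ := hKi
  have hKne : K.Nonempty := ⟨a, interior_subset ha⟩
  -- metric projection onto `K`
  have hproj : ∀ z, ∃ p, p ∈ K ∧ ∀ w ∈ K, ⟪z - p, w - p⟫ ≤ 0 := by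
    intro z
    obtain ⟨p, hpK, hp⟩ :=
      exists_norm_eq_iInf_of_complete_convex hKne hKc.isClosed.isComplete hKv z
    exact ⟨p, hpK, (norm_eq_iInf_iff_real_inner_le_zero hKv hpK).1 hp⟩
  choose P hPK hP using hproj
  -- the projection is 1-Lipschitz
  have hlip : LipschitzWith 1 P := by
    apply LipschitzWith.of_dist_le_mul
    intro x y
    rw [NNReal.coe_one, one_mul, dist_eq_norm, dist_eq_norm]
    by_cases hxy : P x = P y
    · simp [hxy]
    · have h1 : ⟪x - P x, P y - P x⟫ ≤ 0 := hP x (P y) (hPK y)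
      have h2 : ⟪y - P y, P x - P y⟫ ≤ 0 := hP y (P x) (hPK x)
      have hsum : x - y = (x - P x) + (P x - P y) + (P y - y) := by abel
      have expand : ⟪x - y, P x - P y⟫
          = ⟪x - P x, P x - P y⟫ + ⟪P x - P y, P x - P y⟫ + ⟪P y - y, P x - P y⟫ := by
        rw [hsum, inner_add_left, inner_add_left]
      have e1 : ⟪x - P x, P x - P y⟫ = -⟪x - P x, P y - P x⟫ := by
        rw [← inner_neg_right, neg_sub]
      have e2 : ⟪P y - y, P x - P y⟫ = -⟪y - P y, P x - P y⟫ := by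
        rw [← inner_neg_left, neg_sub]
      have hself : ⟪P x - P y, P x - P y⟫ = ‖P x - P y‖ ^ 2 :=
        real_inner_self_eq_norm_sq _
      have key : ‖P x - P y‖ ^ 2 ≤ ⟪x - y, P x - P y⟫ := by
        rw [expand, e1, e2, hself]; linarith
      have hle : ⟪x - y, P x - P y⟫ ≤ ‖x - y‖ * ‖P x - P y‖ := real_inner_le_norm _ _
      have hpos : 0 < ‖P x - P y‖ := by
        rw [norm_pos_iff, sub_ne_zero]; exact hxy
      nlinarith
  -- the projection maps `frontier L` onto `frontier K`
  have frsub : frontier K ⊆ P '' frontier L := by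
    intro x hx
    rw [hKc.isClosed.frontier_eq] at hx
    obtain ⟨hxK, hxint⟩ := hx
    obtain ⟨f, hf⟩ :=
      geometric_hahn_banach_open_point hKv.interior isOpen_interior hxint
    have hfa : f a < f x := hf a ha
    -- the supporting functional
    have hfK : ∀ y ∈ K, f y ≤ f x := by
      intro y hy
      have key : ∀ t ∈ Set.Ioo (0 : ℝ) 1, (1 - t) * f a + t * f y < f x := by
        intro t ht
        have hmem : (1 - t) • a + t • y ∈ interior K :=
          hKv.combo_interior_closure_mem_interior ha (subset_closure hy)
            (by linarith [ht.2]) ht.1.le (by ring)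
        have := hf _ hmem
        simpa [map_add, _root_.map_smul, smul_eq_mul] using this
      have hlim : Tendsto (fun t : ℝ => (1 - t) * f a + t * f y) (nhdsWithin 1 (Set.Iio 1))
          (nhds (f y)) := by
        have hc : Continuous fun t : ℝ => (1 - t) * f a + t * f y := by continuity
        have h0 := hc.tendsto 1
        simp only [sub_self, zero_mul, one_mul, zero_add] at h0
        exact h0.mono_left nhdsWithin_le_nhds
      refine le_of_tendsto hlim ?_
      filter_upwards [Ioo_mem_nhdsLT_of_mem
        (show (1 : ℝ) ∈ Set.Ioc (0 : ℝ) 1 by norm_num)] with t ht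
      exact (key t ht).le
    set v := (InnerProductSpace.toDual ℝ (EuclideanSpace ℝ (Fin n))).symm f with hv
    have hvy : ∀ y, ⟪v, y⟫ = f y := fun y => InnerProductSpace.toDual_symm_apply
    have hv0 : v ≠ 0 := by
      intro h0
      have : f a = f x := by
        have ha0 : ⟪v, a⟫ = 0 := by rw [h0, inner_zero_left]
        have hx0 : ⟪v, x⟫ = 0 := by rw [h0, inner_zero_left]
        rw [← hvy a, ← hvy x, ha0, hx0]
      linarith
    have hvpos : 0 < ‖v‖ := norm_pos_iff.2 hv0
    -- the exit point of the outward ray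
    set S : Set ℝ := {t | 0 ≤ t ∧ x + t • v ∈ L} with hS
    have hS0 : (0 : ℝ) ∈ S := ⟨le_rfl, by simpa using hKL hxK⟩
    obtain ⟨R, hR⟩ := isBounded_iff_forall_norm_le.1 hLc.isBounded
    have hbdd : BddAbove S := by
      refine ⟨(R + ‖x‖) / ‖v‖, fun t ht => ?_⟩
      rw [le_div_iff₀ hvpos]
      have h1 : ‖x + t • v‖ ≤ R := hR _ ht.2
      have h2 : ‖t • v‖ ≤ R + ‖x‖ := by
        have : t • v = (x + t • v) - x := by abel
        rw [this]
        calc ‖(x + t • v) - x‖ ≤ ‖x + t • v‖ + ‖x‖ := norm_sub_le _ _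
          _ ≤ R + ‖x‖ := by linarith
      calc t * ‖v‖ = ‖t • v‖ := by
            rw [norm_smul, Real.norm_eq_abs, abs_of_nonneg ht.1]
        _ ≤ R + ‖x‖ := h2
    have hSclosed : IsClosed S := by
      have : S = Set.Ici (0 : ℝ) ∩ ((fun t : ℝ => x + t • v) ⁻¹' L) := by
        ext t; simp [hS, Set.mem_Ici]
      rw [this]
      exact isClosed_Ici.inter (hLc.isClosed.preimage (continuous_const.add (continuous_id.smul continuous_const)))
    set t₀ := sSup S with ht₀def
    have ht₀ : t₀ ∈ S := hSclosed.csSup_mem ⟨0, hS0⟩ hbdd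
    set z := x + t₀ • v with hz
    have hzL : z ∈ L := ht₀.2
    have hzfr : z ∈ frontier L := by
      rw [hLc.isClosed.frontier_eq]
      refine ⟨hzL, fun hzint => ?_⟩
      obtain ⟨η, hη, hballz⟩ := Metric.isOpen_iff.1 isOpen_interior z hzint
      set t₁ := t₀ + η / (2 * ‖v‖) with ht₁def
      have hδpos : 0 < η / (2 * ‖v‖) := by positivity
      have ht₁S : t₁ ∈ S := by
        constructor
        · have := ht₀.1; simp only [ht₁def]; linarith
        · apply interior_subset (hballz ?_)
          have : x + t₁ • v - z = (η / (2 * ‖v‖)) • v := by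
            rw [ht₁def, hz, add_smul]; abel
          rw [mem_ball_iff_norm, this, norm_smul, Real.norm_eq_abs, abs_of_nonneg hδpos.le]
          have hv2 : η / (2 * ‖v‖) * ‖v‖ = η / 2 := by field_simp
          rw [hv2]
          linarith
      have : t₁ ≤ t₀ := le_csSup hbdd ht₁S
      simp only [ht₁def] at this
      linarith
    -- `P z = x`
    have hPz : P z = x := by
      have h1 : ⟪z - P z, x - P z⟫ ≤ 0 := hP z x hxK
      have h2 : ⟪z - x, P z - x⟫ ≤ 0 := by
        have hzx : z - x = t₀ • v := by rw [hz]; abel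
        rw [hzx, real_inner_smul_left]
        have hinner : ⟪v, P z - x⟫ = f (P z) - f x := by
          rw [inner_sub_right, hvy, hvy]
        rw [hinner]
        exact mul_nonpos_of_nonneg_of_nonpos ht₀.1 (by linarith [hfK (P z) (hPK z)])
      have hsplit : ‖x - P z‖ ^ 2 = ⟪z - P z, x - P z⟫ + ⟪z - x, P z - x⟫ := by
        have e1 : x - P z = (z - P z) - (z - x) := by abel
        have e2 : ⟪z - x, P z - x⟫ = -⟪z - x, x - P z⟫ := by
          rw [← inner_neg_right, neg_sub]
        rw [← real_inner_self_eq_norm_sq]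
        nth_rewrite 1 [e1]
        rw [inner_sub_left, e2]
        ring
      have hle0 : ‖x - P z‖ ^ 2 ≤ 0 := by rw [hsplit]; linarith
      have : ‖x - P z‖ = 0 := by nlinarith [norm_nonneg (x - P z)]
      have : x - P z = 0 := norm_eq_zero.1 this
      exact (sub_eq_zero.1 this).symm
    exact ⟨z, hzfr, hPz⟩
  calc μH[d] (frontier K) ≤ μH[d] (P '' frontier L) := measure_mono frsub
    _ ≤ ((1 : ℝ≥0) : ℝ≥0∞) ^ d * μH[d] (frontier L) :=
        hlip.hausdorffMeasure_image_le hd _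
    _ = μH[d] (frontier L) := by
        rw [ENNReal.coe_one, ENNReal.one_rpow, one_mul]

/-- The outer parallel body is contained in a dilate of the body. -/
lemma cthickening_subset_smul {K : Set (EuclideanSpace ℝ (Fin n))}
    (hKc : IsCompact K) (hKv : Convex ℝ K) {r : ℝ} (hr : 0 < r)
    (hball : closedBall (0 : EuclideanSpace ℝ (Fin n)) r ⊆ K) {ε : ℝ} (hε : 0 < ε) :
    cthickening ε K ⊆ (1 + ε / r) • K := by
  intro x hx
  rw [hKc.cthickening_eq_biUnion_closedBall hε.le] at hx
  simp only [Set.mem_iUnion, exists_prop] at hx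
  obtain ⟨y, hyK, hxy⟩ := hx
  set δ := ε / r with hδdef
  have hδ : 0 < δ := div_pos hε hr
  have hzK : δ⁻¹ • (x - y) ∈ K := by
    apply hball
    rw [mem_closedBall_zero_iff, norm_smul, Real.norm_eq_abs, abs_of_nonneg (inv_nonneg.2 hδ.le)]
    have hxy' : ‖x - y‖ ≤ ε := by rwa [mem_closedBall, dist_eq_norm] at hxy
    calc δ⁻¹ * ‖x - y‖ ≤ δ⁻¹ * ε := by
          exact mul_le_mul_of_nonneg_left hxy' (inv_nonneg.2 hδ.le)
      _ = r := by rw [hδdef]; field_simp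
  have hxmem : x ∈ K + δ • K := by
    have hx_eq : x = y + δ • (δ⁻¹ • (x - y)) := by
      rw [smul_smul, mul_inv_cancel₀ hδ.ne', one_smul]; abel
    rw [hx_eq]
    exact Set.add_mem_add hyK (Set.smul_mem_smul_set hzK)
  have : (1 + δ) • K = (1 : ℝ) • K + δ • K := hKv.add_smul zero_le_one hδ.le
  rw [this, one_smul]
  exact hxmem

/-- Surface area of a dilate. -/
lemma hausdorff_frontier_smul {d : ℝ} (hd : 0 ≤ d) {c : ℝ} (hc : 0 < c)
    (K : Set (EuclideanSpace ℝ (Fin n))) :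
    μH[d] (frontier (c • K)) = (‖c‖₊ : ℝ≥0∞) ^ d * μH[d] (frontier K) := by
  have hfr : frontier (c • K) = c • frontier K := by
    rw [frontier, frontier, closure_smul₀' hc.ne', interior_smul₀ hc.ne',
      Set.smul_set_sdiff₀ hc.ne']
  rw [hfr, MeasureTheory.Measure.hausdorffMeasure_smul₀ hd hc.ne',
    ENNReal.smul_def, smul_eq_mul, ENNReal.coe_rpow_of_nonneg _ hd]

/-- The main statement, in the special case where `K` contains a closed ball around `0`. -/
lemma main_zero {d : ℝ} (hd : 0 ≤ d) {K : Set (EuclideanSpace ℝ (Fin n))}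
    (hKc : IsCompact K) (hKv : Convex ℝ K) {r : ℝ} (hr : 0 < r)
    (hball : closedBall (0 : EuclideanSpace ℝ (Fin n)) r ⊆ K) :
    Tendsto (fun ε : ℝ => μH[d] (frontier (cthickening ε K)))
      (nhdsWithin 0 (Set.Ioi 0)) (nhds (μH[d] (frontier K))) := by
  have hKi : (interior K).Nonempty :=
    ⟨0, interior_maximal (ball_subset_closedBall.trans hball) isOpen_ball (mem_ball_self hr)⟩
  set a := μH[d] (frontier K) with ha
  have hlow : ∀ ε ∈ Set.Ioi (0 : ℝ), a ≤ μH[d] (frontier (cthickening ε K)) := fun ε _ =>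
    surface_mono hd hKc hKv hKi hKc.cthickening (self_subset_cthickening _)
  have hup : ∀ ε ∈ Set.Ioi (0 : ℝ),
      μH[d] (frontier (cthickening ε K)) ≤ (‖1 + ε / r‖₊ : ℝ≥0∞) ^ d * a := by
    intro ε hε
    rw [Set.mem_Ioi] at hε
    have hc : (0 : ℝ) < 1 + ε / r := by positivity
    have hLc : IsCompact ((1 + ε / r) • K) := by
      rw [← Set.image_smul]; exact hKc.image (continuous_const_smul _)
    have hmono := surface_mono hd hKc.cthickening (hKv.cthickening ε)
      (hKi.mono (interior_mono (self_subset_cthickening _)))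
      hLc (cthickening_subset_smul hKc hKv hr hball hε)
    calc μH[d] (frontier (cthickening ε K)) ≤ μH[d] (frontier ((1 + ε / r) • K)) := hmono
      _ = (‖1 + ε / r‖₊ : ℝ≥0∞) ^ d * a := hausdorff_frontier_smul hd hc K
  have hcoef : Tendsto (fun ε : ℝ => ((‖1 + ε / r‖₊ : ℝ≥0∞)) ^ d)
      (nhdsWithin 0 (Set.Ioi 0)) (nhds 1) := by
    have hcont : Continuous fun ε : ℝ => ((‖1 + ε / r‖₊ : ℝ≥0∞)) :=
      ENNReal.continuous_coe.comp (continuous_nnnorm.comp (by continuity))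
    have h1 : Tendsto (fun ε : ℝ => ((‖1 + ε / r‖₊ : ℝ≥0∞)))
        (nhdsWithin 0 (Set.Ioi 0)) (nhds 1) := by
      have h0 := hcont.tendsto 0
      norm_num at h0
      exact h0.mono_left nhdsWithin_le_nhds
    have h2 := (ENNReal.continuous_rpow_const (y := d)).tendsto 1
    have := h2.comp h1
    rwa [ENNReal.one_rpow] at this
  have hprod : Tendsto (fun ε : ℝ => (‖1 + ε / r‖₊ : ℝ≥0∞) ^ d * a)
      (nhdsWithin 0 (Set.Ioi 0)) (nhds a) := by
    have := ENNReal.Tendsto.mul_const (b := a) hcoef (Or.inl one_ne_zero)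
    rwa [one_mul] at this
  exact tendsto_of_tendsto_of_tendsto_of_le_of_le' tendsto_const_nhds hprod
    (eventually_nhdsWithin_of_forall hlow) (eventually_nhdsWithin_of_forall hup)

lemma cthickening_vadd' (c : EuclideanSpace ℝ (Fin n)) (s : Set (EuclideanSpace ℝ (Fin n)))
    (δ : ℝ) : cthickening δ (c +ᵥ s) = c +ᵥ cthickening δ s := by
  ext x
  rw [mem_cthickening_iff, Set.mem_vadd_set_iff_neg_vadd_mem, mem_cthickening_iff]
  have : EMetric.infEdist x (c +ᵥ s) = EMetric.infEdist (-c +ᵥ x) s := by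
    conv_lhs => rw [show x = c +ᵥ (-c +ᵥ x) by simp [vadd_vadd]]
    exact EMetric.infEdist_vadd c _ s
  exact Iff.of_eq (congrArg (· ≤ ENNReal.ofReal δ) this)

lemma frontier_vadd' (c : EuclideanSpace ℝ (Fin n)) (s : Set (EuclideanSpace ℝ (Fin n))) :
    frontier (c +ᵥ s) = c +ᵥ frontier s := by
  have h := (Homeomorph.addLeft c).image_frontier s
  have h2 : ⇑(Homeomorph.addLeft c) '' frontier s = c +ᵥ frontier s := by
    rw [← Set.image_vadd]; rfl
  have h3 : ⇑(Homeomorph.addLeft c) '' s = c +ᵥ s := by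
    rw [← Set.image_vadd]; rfl
  rw [h2, h3] at h
  exact h.symm

lemma hausdorff_vadd' {d : ℝ} (c : EuclideanSpace ℝ (Fin n))
    (s : Set (EuclideanSpace ℝ (Fin n))) : μH[d] (c +ᵥ s) = μH[d] s :=
  MeasureTheory.hausdorffMeasure_vadd c (Or.inr fun y => ⟨-c + y, by simp [vadd_eq_add]⟩) s

end Aux

/-- The surface area of the outer parallel body `K^ε = cthickening ε K` of a compact
convex body `K ⊆ ℝⁿ` with nonempty interior tends to the surface area of `K` as
`ε → 0⁺`, where surface area is the `(n-1)`-dimensional Hausdorff measure of the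
frontier. -/
theorem surfaceArea_parallelBody_tendsto
    (n : ℕ) (hn : 2 ≤ n)
    (K : Set (EuclideanSpace ℝ (Fin n)))
    (hK_cpt : IsCompact K) (hK_conv : Convex ℝ K) (hK_int : (interior K).Nonempty) :
    Tendsto (fun ε : ℝ => μH[(n : ℝ) - 1] (frontier (cthickening ε K)))
      (nhdsWithin 0 (Set.Ioi 0)) (nhds (μH[(n : ℝ) - 1] (frontier K))) := by
  set d : ℝ := (n : ℝ) - 1 with hd_def
  have hd : 0 ≤ d := by
    have : (2 : ℝ) ≤ (n : ℝ) := by exact_mod_cast hn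
    simp only [hd_def]; linarith
  obtain ⟨x₀, hx₀⟩ := hK_int
  obtain ⟨r, hr, hrball⟩ := Metric.isOpen_iff.1 isOpen_interior x₀ hx₀
  have hball : closedBall x₀ (r / 2) ⊆ K :=
    (closedBall_subset_ball (by linarith)).trans (hrball.trans interior_subset)
  set K₀ : Set (EuclideanSpace ℝ (Fin n)) := (-x₀) +ᵥ K with hK₀
  have hK₀c : IsCompact K₀ := by
    rw [hK₀, ← Set.image_vadd]; exact hK_cpt.image (continuous_const_vadd _)
  have hK₀v : Convex ℝ K₀ := hK_conv.vadd _
  have hball₀ : closedBall (0 : EuclideanSpace ℝ (Fin n)) (r / 2) ⊆ K₀ := by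
    intro y hy
    rw [hK₀, Set.mem_vadd_set_iff_neg_vadd_mem, neg_neg]
    apply hball
    rw [mem_closedBall_zero_iff] at hy
    simpa [mem_closedBall, dist_eq_norm, vadd_eq_add, add_sub_cancel_left] using hy
  have hKeq : K = x₀ +ᵥ K₀ := by
    rw [hK₀, vadd_vadd]
    simp
  have heq1 : ∀ ε : ℝ, μH[d] (frontier (cthickening ε K))
      = μH[d] (frontier (cthickening ε K₀)) := by
    intro ε
    rw [hKeq, cthickening_vadd', frontier_vadd', hausdorff_vadd']
  have heq2 : μH[d] (frontier K) = μH[d] (frontier K₀) := by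
    rw [hKeq, frontier_vadd', hausdorff_vadd']
  simp only [← hd_def, heq1, heq2]
  exact main_zero hd hK₀c hK₀v (by linarith : (0:ℝ) < r / 2) hball₀
end

section
/- Let E = EuclideanSpace ℝ n, let s, Ω ⊆ E be nonempty sets, let L, δ > 0 with L·δ < 1, and let f : E → E satisfy: f is Lipschitz on s with constant L, ‖f x‖ = 1 for every x ∈ s, and every point p ∈ Ω admits a point q ∈ s with dist(p, q) ≤ δ. Then there exists g : E → E such that g is Lipschitz on Ω with constant 2L/(1 − L·δ), ‖g x‖ = 1 for every x ∈ Ω, and g x = f x for every x ∈ s ∩ Ω. -/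
open Metric

open Finset

variable {E : Type*} [NormedAddCommGroup E] [InnerProductSpace ℝ E] [FiniteDimensional ℝ E]

local notation "⟪" x ", " y "⟫" => @inner ℝ _ _ x y

private def kterm (L : ℝ) (x : E) (p : E × E) (y : E) : ℝ :=
  ‖y - p.2‖ ^ 2 - L ^ 2 * ‖x - p.1‖ ^ 2

private lemma kterm_cont (L : ℝ) (x : E) (p : E × E) : Continuous (kterm L x p) :=
  (((continuous_id.sub continuous_const).norm.pow 2).sub continuous_const)

private def kG (L : ℝ) (x : E) (t : Finset (E × E)) (ht : t.Nonempty) (y : E) : ℝ :=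
  t.sup' ht (fun p => kterm L x p y)

private lemma kG_cont (L : ℝ) (x : E) (t : Finset (E × E)) (ht : t.Nonempty) :
    Continuous (kG L x t ht) :=
  Continuous.finset_sup'_apply ht (fun p _ => kterm_cont L x p)

private lemma kG_min_exists (L : ℝ) (x : E) (t : Finset (E × E)) (ht : t.Nonempty) :
    ∃ y₀ : E, ∀ y : E, kG L x t ht y₀ ≤ kG L x t ht y := by
  obtain ⟨p₀, hp₀⟩ := id ht
  set b₀ := p₀.2 with hb₀
  set d₀ := ‖x - p₀.1‖ with hd₀
  have hg₀low : -(L ^ 2 * d₀ ^ 2) ≤ kG L x t ht b₀ := by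
    have h := Finset.le_sup' (fun p => kterm L x p b₀) hp₀
    have he : kterm L x p₀ b₀ = -(L ^ 2 * d₀ ^ 2) := by simp [kterm, hb₀, hd₀]
    rw [he] at h; exact h
  set R := Real.sqrt (kG L x t ht b₀ + L ^ 2 * d₀ ^ 2) with hR
  have hR0 : 0 ≤ R := Real.sqrt_nonneg _
  have hRsq : R ^ 2 = kG L x t ht b₀ + L ^ 2 * d₀ ^ 2 := Real.sq_sqrt (by linarith)
  obtain ⟨y₀, hy₀ball, hy₀min⟩ :=
    (isCompact_closedBall b₀ R).exists_isMinOn ⟨b₀, by simp [hR0]⟩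
      (kG_cont L x t ht).continuousOn
  refine ⟨y₀, fun y => ?_⟩
  by_cases hy : y ∈ closedBall b₀ R
  · exact hy₀min hy
  · have h1 : R < ‖y - b₀‖ := by
      rw [mem_closedBall, dist_eq_norm] at hy; linarith [not_le.mp hy]
    have h2 : kG L x t ht b₀ < kterm L x p₀ y := by
      have hsq : R ^ 2 < ‖y - b₀‖ ^ 2 := by nlinarith
      have : kterm L x p₀ y = ‖y - b₀‖ ^ 2 - L ^ 2 * d₀ ^ 2 := by simp [kterm, hb₀, hd₀]
      rw [this]; nlinarith
    have h3 : kterm L x p₀ y ≤ kG L x t ht y := Finset.le_sup' (fun p => kterm L x p y) hp₀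
    have h4 : kG L x t ht y₀ ≤ kG L x t ht b₀ := hy₀min (by simp [hR0])
    linarith

set_option maxHeartbeats 1000000 in
/-- Finite one-point Kirszbraun lemma. -/
private lemma kirszbraun_finset (L : ℝ) (hL : 0 ≤ L) (t : Finset (E × E))
    (hlip : ∀ p ∈ t, ∀ p' ∈ t, ‖p.2 - p'.2‖ ≤ L * ‖p.1 - p'.1‖) (x : E) :
    ∃ y : E, ∀ p ∈ t, ‖y - p.2‖ ≤ L * ‖x - p.1‖ := by
  rcases t.eq_empty_or_nonempty with rfl | ht
  · exact ⟨0, by simp⟩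
  classical
  obtain ⟨y₀, hmin⟩ := kG_min_exists L x t ht
  -- it suffices to show the minimum value is ≤ 0
  suffices hm0 : kG L x t ht y₀ ≤ 0 by
    refine ⟨y₀, fun p hp => ?_⟩
    have h1 : kterm L x p y₀ ≤ kG L x t ht y₀ := Finset.le_sup' (fun p => kterm L x p y₀) hp
    have h2 : ‖y₀ - p.2‖ ^ 2 ≤ (L * ‖x - p.1‖) ^ 2 := by
      have := h1.trans hm0
      simp only [kterm] at this
      nlinarith
    have h3 : 0 ≤ L * ‖x - p.1‖ := mul_nonneg hL (norm_nonneg _)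
    nlinarith [norm_nonneg (y₀ - p.2)]
  set m := kG L x t ht y₀ with hm
  -- the active set
  set I : Finset (E × E) := t.filter (fun p => kterm L x p y₀ = m) with hI
  have hIne : I.Nonempty := by
    obtain ⟨p, hp, hpe⟩ := Finset.exists_mem_eq_sup' ht (fun p => kterm L x p y₀)
    exact ⟨p, Finset.mem_filter.mpr ⟨hp, hpe.symm⟩⟩
  have hIsub : ∀ p ∈ I, p ∈ t ∧ kterm L x p y₀ = m := fun p hp => Finset.mem_filter.mp hp
  -- y₀ lies in the convex hull of the active images
  have hhull : y₀ ∈ convexHull ℝ (Prod.snd '' (I : Set (E × E))) := by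
    by_contra hy₀S
    have hfin : (Prod.snd '' (I : Set (E × E))).Finite := I.finite_toSet.image _
    obtain ⟨φ, u, hu1, hu2⟩ :=
      geometric_hahn_banach_point_closed (convex_convexHull ℝ _)
        (hfin.isClosed_convexHull (𝕜 := ℝ)) hy₀S
    set v := (InnerProductSpace.toDual ℝ E).symm φ with hv
    have hvz : ∀ z : E, ⟪v, z⟫ = φ z := by
      intro z
      rw [hv, ← InnerProductSpace.toDual_apply_apply]
      simp
    set c := u - φ y₀ with hc
    have hc0 : 0 < c := by simp only [hc]; linarith
    have hactive : ∀ p ∈ I, c ≤ ⟪v, p.2 - y₀⟫ := by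
      intro p hp
      have hmem : p.2 ∈ convexHull ℝ (Prod.snd '' (I : Set (E × E))) :=
        subset_convexHull ℝ _ ⟨p, by simpa using hp, rfl⟩
      have := hu2 _ hmem
      rw [inner_sub_right, hvz, hvz]
      linarith
    have hvne : (0:ℝ) < ‖v‖ ^ 2 := by
      rcases eq_or_ne v 0 with h0 | h0
      · exfalso
        obtain ⟨p, hp⟩ := hIne
        have := hactive p hp
        rw [h0, inner_zero_left] at this
        linarith
      · have : 0 < ‖v‖ := norm_pos_iff.mpr h0
        positivity
    -- bound on distances to the active points
    set B := t.sup' ht (fun p => ‖y₀ - p.2‖) with hB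
    have hBle : ∀ p ∈ t, ‖y₀ - p.2‖ ≤ B := fun p hp => Finset.le_sup' (fun p => ‖y₀ - p.2‖) hp
    have hB0 : 0 ≤ B := le_trans (norm_nonneg _) (hBle _ ht.choose_spec)
    -- the inactive gap
    set J : Finset (E × E) := t.filter (fun p => kterm L x p y₀ ≠ m) with hJ
    have hJle : ∀ p ∈ J, kterm L x p y₀ < m := by
      intro p hp
      obtain ⟨hpt, hpne⟩ := Finset.mem_filter.mp hp
      exact lt_of_le_of_ne (Finset.le_sup' (fun p => kterm L x p y₀) hpt) hpne
    -- choose step size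
    set D := 2 * B * ‖v‖ + ‖v‖ ^ 2 with hD
    have hD0 : 0 < D := by
      have := mul_nonneg hB0 (norm_nonneg v)
      rw [hD]; nlinarith
    set γ := if hJn : J.Nonempty then J.inf' hJn (fun p => m - kterm L x p y₀) else 1 with hγ
    have hγ0 : 0 < γ := by
      rw [hγ]
      split
      · next hJn =>
        rw [Finset.lt_inf'_iff]
        intro p hp
        linarith [hJle p hp]
      · norm_num
    have hγJ : ∀ p ∈ J, γ ≤ m - kterm L x p y₀ := by
      intro p hp
      rw [hγ]
      rw [dif_pos ⟨p, hp⟩]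
      exact Finset.inf'_le _ hp
    set τ := min (min 1 (c / ‖v‖ ^ 2)) (γ / (2 * D)) with hτ
    have hτ0 : 0 < τ := by
      apply lt_min (lt_min one_pos (by positivity)) (by positivity)
    have hτ1 : τ ≤ 1 := le_trans (min_le_left _ _) (min_le_left _ _)
    have hτc : τ * ‖v‖ ^ 2 ≤ c := by
      have : τ ≤ c / ‖v‖ ^ 2 :=
        le_trans (min_le_left (min 1 (c / ‖v‖ ^ 2)) (γ / (2 * D))) (min_le_right 1 (c / ‖v‖ ^ 2))
      calc τ * ‖v‖ ^ 2 ≤ (c / ‖v‖ ^ 2) * ‖v‖ ^ 2 := by nlinarith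
        _ = c := div_mul_cancel₀ _ (ne_of_gt hvne)
    have hτγ : τ * D ≤ γ / 2 := by
      have h := min_le_right (min 1 (c / ‖v‖ ^ 2)) (γ / (2 * D))
      calc τ * D ≤ (γ / (2 * D)) * D := by nlinarith
        _ = γ / 2 := by field_simp
    set y₁ := y₀ + τ • v with hy₁
    have hterm1 : ∀ p : E × E,
        kterm L x p y₁ = kterm L x p y₀ + 2 * τ * ⟪y₀ - p.2, v⟫ + τ ^ 2 * ‖v‖ ^ 2 := by
      intro p
      have : y₁ - p.2 = (y₀ - p.2) + τ • v := by rw [hy₁]; abel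
      simp only [kterm, this, norm_add_sq_real, inner_smul_right, norm_smul]
      rw [Real.norm_eq_abs]
      rw [mul_pow, sq_abs]
      ring
    have hlt : ∀ p ∈ t, kterm L x p y₁ < m := by
      intro p hp
      by_cases hpI : p ∈ I
      · have h1 := hactive p hpI
        have h2 : ⟪y₀ - p.2, v⟫ ≤ -c := by
          have : ⟪y₀ - p.2, v⟫ = -⟪v, p.2 - y₀⟫ := by
            rw [real_inner_comm]
            rw [show y₀ - p.2 = -(p.2 - y₀) by abel, inner_neg_right]
          rw [this]; linarith
        rw [hterm1 p, (hIsub p hpI).2]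
        nlinarith
      · have hpJ : p ∈ J := Finset.mem_filter.mpr ⟨hp, by
          intro h; exact hpI (Finset.mem_filter.mpr ⟨hp, h⟩)⟩
        have h1 := hγJ p hpJ
        have h2 : ⟪y₀ - p.2, v⟫ ≤ B * ‖v‖ := by
          calc ⟪y₀ - p.2, v⟫ ≤ ‖y₀ - p.2‖ * ‖v‖ := real_inner_le_norm _ _
            _ ≤ B * ‖v‖ := by
                have := hBle p hp
                nlinarith [norm_nonneg v]
        rw [hterm1 p]
        have h3 : 2 * τ * ⟪y₀ - p.2, v⟫ + τ ^ 2 * ‖v‖ ^ 2 ≤ τ * D := by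
          have hv0 : 0 ≤ ‖v‖ := norm_nonneg v
          have hτsq : τ ^ 2 * ‖v‖ ^ 2 ≤ τ * ‖v‖ ^ 2 := by
            nlinarith [mul_nonneg (mul_nonneg (sub_nonneg.mpr hτ1) hτ0.le) (sq_nonneg ‖v‖)]
          have h2' : 2 * τ * ⟪y₀ - p.2, v⟫ ≤ 2 * τ * (B * ‖v‖) := by nlinarith
          calc 2 * τ * ⟪y₀ - p.2, v⟫ + τ ^ 2 * ‖v‖ ^ 2
              ≤ 2 * τ * (B * ‖v‖) + τ * ‖v‖ ^ 2 := by linarith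
            _ = τ * D := by rw [hD]; ring
        have h4 : τ * D < γ := lt_of_le_of_lt hτγ (by linarith)
        linarith
    have : kG L x t ht y₁ < m := by
      rw [kG, Finset.sup'_lt_iff]
      exact hlt
    exact absurd (hmin y₁) (not_le.mpr this)
  -- extract a convex combination
  rw [_root_.convexHull_eq] at hhull
  obtain ⟨ι, u, w, z, hw0, hw1, hzS, hcm⟩ := hhull
  rw [Finset.centerMass_eq_of_sum_1 _ _ hw1] at hcm
  -- choose active pairs over the combination
  have hchoice : ∀ i ∈ u, ∃ p : E × E, p ∈ I ∧ p.2 = z i := by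
    intro i hi
    obtain ⟨p, hpI, hpz⟩ := hzS i hi
    exact ⟨p, by simpa using hpI, hpz⟩
  classical
  set A : ι → E × E := fun i => if h : ∃ p : E × E, p ∈ I ∧ p.2 = z i then h.choose else ht.choose
    with hA
  have hAspec : ∀ i ∈ u, A i ∈ I ∧ (A i).2 = z i := by
    intro i hi
    rw [hA]
    simp only
    rw [dif_pos (hchoice i hi)]
    exact (hchoice i hi).choose_spec
  -- the vectors
  set uv : ι → E := fun i => y₀ - z i with huv
  set pv : ι → E := fun i => x - (A i).1 with hpv
  have hnorm_uv : ∀ i ∈ u, ‖uv i‖ ^ 2 = m + L ^ 2 * ‖pv i‖ ^ 2 := by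
    intro i hi
    obtain ⟨hAI, hAz⟩ := hAspec i hi
    have := (hIsub _ hAI).2
    simp only [kterm] at this
    rw [huv, hpv]
    simp only
    rw [← hAz]
    linarith
  have hsum0 : ∑ i ∈ u, w i • uv i = 0 := by
    rw [huv]
    simp only [smul_sub]
    rw [Finset.sum_sub_distrib, ← Finset.sum_smul, hw1, one_smul, hcm, sub_self]
  -- cross term bound
  have hcross : ∀ i ∈ u, ∀ j ∈ u, m + L ^ 2 * ⟪pv i, pv j⟫ ≤ ⟪uv i, uv j⟫ := by
    intro i hi j hj
    obtain ⟨hAIi, hAzi⟩ := hAspec i hi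
    obtain ⟨hAIj, hAzj⟩ := hAspec j hj
    have hlipij : ‖(A i).2 - (A j).2‖ ≤ L * ‖(A i).1 - (A j).1‖ :=
      hlip _ (hIsub _ hAIi).1 _ (hIsub _ hAIj).1
    have hlipsq : ‖(A i).2 - (A j).2‖ ^ 2 ≤ L ^ 2 * ‖(A i).1 - (A j).1‖ ^ 2 := by
      nlinarith [norm_nonneg ((A i).2 - (A j).2), norm_nonneg ((A i).1 - (A j).1),
        mul_nonneg hL (norm_nonneg ((A i).1 - (A j).1))]
    have huvsub : uv i - uv j = (A j).2 - (A i).2 := by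
      rw [huv]; simp only; rw [← hAzi, ← hAzj]; abel
    have hpvsub : pv i - pv j = (A j).1 - (A i).1 := by
      rw [hpv]; simp only; abel
    have e1 : ‖uv i - uv j‖ ^ 2 = ‖uv i‖ ^ 2 - 2 * ⟪uv i, uv j⟫ + ‖uv j‖ ^ 2 :=
      norm_sub_sq_real _ _
    have e2 : ‖pv i - pv j‖ ^ 2 = ‖pv i‖ ^ 2 - 2 * ⟪pv i, pv j⟫ + ‖pv j‖ ^ 2 :=
      norm_sub_sq_real _ _
    have e3 : ‖uv i - uv j‖ ^ 2 ≤ L ^ 2 * ‖pv i - pv j‖ ^ 2 := by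
      rw [huvsub, hpvsub, norm_sub_rev ((A j).1), norm_sub_rev ((A j).2)]
      exact hlipsq
    have e4 := hnorm_uv i hi
    have e5 := hnorm_uv j hj
    nlinarith
  -- expand the double sum
  have hexpand : (0:ℝ) = ∑ i ∈ u, ∑ j ∈ u, w i * w j * ⟪uv i, uv j⟫ := by
    have : (0:ℝ) = ⟪∑ i ∈ u, w i • uv i, ∑ j ∈ u, w j • uv j⟫ := by
      rw [hsum0, inner_zero_left]
    rw [this, sum_inner]
    apply Finset.sum_congr rfl
    intro i hi
    rw [real_inner_smul_left, inner_sum, Finset.mul_sum]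
    apply Finset.sum_congr rfl
    intro j hj
    rw [real_inner_smul_right]
    ring
  have hexpand2 : ∑ i ∈ u, ∑ j ∈ u, w i * w j * ⟪pv i, pv j⟫ =
      ⟪∑ i ∈ u, w i • pv i, ∑ j ∈ u, w j • pv j⟫ := by
    rw [sum_inner]
    apply Finset.sum_congr rfl
    intro i hi
    rw [real_inner_smul_left, inner_sum, Finset.mul_sum]
    apply Finset.sum_congr rfl
    intro j hj
    rw [real_inner_smul_right]
    ring
  have hlower : ∑ i ∈ u, ∑ j ∈ u, w i * w j * (m + L ^ 2 * ⟪pv i, pv j⟫) ≤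
      ∑ i ∈ u, ∑ j ∈ u, w i * w j * ⟪uv i, uv j⟫ := by
    apply Finset.sum_le_sum
    intro i hi
    apply Finset.sum_le_sum
    intro j hj
    have hwij : 0 ≤ w i * w j := mul_nonneg (hw0 i hi) (hw0 j hj)
    exact mul_le_mul_of_nonneg_left (hcross i hi j hj) hwij
  have hsplit : ∑ i ∈ u, ∑ j ∈ u, w i * w j * (m + L ^ 2 * ⟪pv i, pv j⟫) =
      m + L ^ 2 * ⟪∑ i ∈ u, w i • pv i, ∑ j ∈ u, w j • pv j⟫ := by
    rw [← hexpand2]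
    have : ∑ i ∈ u, ∑ j ∈ u, w i * w j * (m + L ^ 2 * ⟪pv i, pv j⟫) =
        (∑ i ∈ u, ∑ j ∈ u, w i * w j) * m +
        L ^ 2 * ∑ i ∈ u, ∑ j ∈ u, w i * w j * ⟪pv i, pv j⟫ := by
      rw [Finset.sum_mul, Finset.mul_sum]
      rw [← Finset.sum_add_distrib]
      apply Finset.sum_congr rfl
      intro i hi
      rw [Finset.sum_mul, Finset.mul_sum, ← Finset.sum_add_distrib]
      apply Finset.sum_congr rfl
      intro j hj
      ring
    rw [this]
    have hww : ∑ i ∈ u, ∑ j ∈ u, w i * w j = 1 := by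
      have : ∑ i ∈ u, ∑ j ∈ u, w i * w j = (∑ i ∈ u, w i) * (∑ j ∈ u, w j) := by
        rw [Finset.sum_mul_sum]
      rw [this, hw1, one_mul]
    rw [hww, one_mul]
  have hPnn : 0 ≤ ⟪∑ i ∈ u, w i • pv i, ∑ j ∈ u, w j • pv j⟫ := real_inner_self_nonneg
  rw [← hexpand] at hlower
  rw [hsplit] at hlower
  nlinarith

/-- One-point Kirszbraun lemma for arbitrary sets, via compactness (finite
intersection property of the closed balls). -/
private lemma kirszbraun_onepoint (L : ℝ) (hL : 0 ≤ L) (s : Set E) (f : E → E)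
    (hlip : ∀ a ∈ s, ∀ b ∈ s, ‖f a - f b‖ ≤ L * ‖a - b‖) (x : E) :
    ∃ y : E, ∀ a ∈ s, ‖y - f a‖ ≤ L * ‖x - a‖ := by
  classical
  rcases s.eq_empty_or_nonempty with rfl | ⟨q₀, hq₀⟩
  · exact ⟨0, by simp⟩
  have hmain : (closedBall (f q₀) (L * ‖x - q₀‖) ∩
      ⋂ a : s, closedBall (f a) (L * ‖x - (a : E)‖)).Nonempty := by
    apply (isCompact_closedBall _ _).inter_iInter_nonempty
    · intro a; exact isClosed_closedBall
    · intro u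
      -- build the finite set of pairs
      set T : Finset (E × E) := insert (q₀, f q₀) (u.image fun (a : ↥s) => ((a : E), f (a : E)))
        with hT
      have hTmem : ∀ p ∈ T, p.1 ∈ s ∧ p.2 = f p.1 := by
        intro p hp
        rw [hT, Finset.mem_insert] at hp
        rcases hp with rfl | hp
        · exact ⟨hq₀, rfl⟩
        · obtain ⟨a, _, rfl⟩ := Finset.mem_image.mp hp
          exact ⟨a.2, rfl⟩
      have hTlip : ∀ p ∈ T, ∀ p' ∈ T, ‖p.2 - p'.2‖ ≤ L * ‖p.1 - p'.1‖ := by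
        intro p hp p' hp'
        obtain ⟨h1, h2⟩ := hTmem p hp
        obtain ⟨h1', h2'⟩ := hTmem p' hp'
        rw [h2, h2']
        exact hlip _ h1 _ h1'
      obtain ⟨y, hy⟩ := kirszbraun_finset L hL T hTlip x
      refine ⟨y, ?_, ?_⟩
      · rw [mem_closedBall, dist_eq_norm]
        exact hy (q₀, f q₀) (by rw [hT]; exact Finset.mem_insert_self _ _)
      · simp only [Set.mem_iInter]
        intro a ha
        rw [mem_closedBall, dist_eq_norm]
        refine hy ((a : E), f (a : E)) ?_
        rw [hT]
        exact Finset.mem_insert_of_mem (Finset.mem_image.mpr ⟨a, ha, rfl⟩)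
  obtain ⟨y, _, hy2⟩ := hmain
  simp only [Set.mem_iInter] at hy2
  refine ⟨y, fun a ha => ?_⟩
  have := hy2 ⟨a, ha⟩
  rwa [mem_closedBall, dist_eq_norm] at this

/-- Extension of a Lipschitz map to finitely many additional points. -/
private lemma kirszbraun_finite_ext (L : ℝ) (hL : 0 ≤ L) (s : Set E) (f : E → E)
    (hlip : ∀ a ∈ s, ∀ b ∈ s, ‖f a - f b‖ ≤ L * ‖a - b‖) (T : Finset E) :
    ∃ h : E → E, (∀ q ∈ s, h q = f q) ∧
      (∀ a ∈ s ∪ ↑T, ∀ b ∈ s ∪ ↑T, ‖h a - h b‖ ≤ L * ‖a - b‖) := by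
  classical
  induction T using Finset.induction_on with
  | empty => exact ⟨f, fun q _ => rfl, by simpa using hlip⟩
  | @insert x T hx ih =>
    obtain ⟨h, hEq, hLip⟩ := ih
    by_cases hxmem : x ∈ s ∪ ↑T
    · refine ⟨h, hEq, ?_⟩
      have : s ∪ ↑(insert x T) = s ∪ ↑T := by
        rw [Finset.coe_insert, Set.union_insert, Set.insert_eq_self.mpr hxmem]
      rw [this]
      exact hLip
    · obtain ⟨y, hy⟩ := kirszbraun_onepoint L hL (s ∪ ↑T) h hLip x
      refine ⟨Function.update h x y, fun q hq => ?_, ?_⟩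
      · have hqx : q ≠ x := by
          intro h'; apply hxmem; rw [← h']; exact Set.mem_union_left _ hq
        rw [Function.update_of_ne hqx _ _]
        exact hEq q hq
      · have hcoe : (s ∪ ↑(insert x T) : Set E) = insert x (s ∪ ↑T) := by
          rw [Finset.coe_insert, Set.union_insert]
        rw [hcoe]
        intro a ha b hb
        rcases Set.mem_insert_iff.mp ha with rfl | ha' <;>
          rcases Set.mem_insert_iff.mp hb with hb' | hb'
        · rw [hb']; simp
        · have hbx : b ≠ a := by
            intro h'; apply hxmem; rw [← h']; exact hb'
          rw [Function.update_self, Function.update_of_ne hbx]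
          exact hy b hb'
        · have hax : a ≠ x := by
            intro h'; apply hxmem; rw [← h']; exact ha'
          rw [hb', Function.update_self, Function.update_of_ne hax]
          rw [norm_sub_rev (h a), norm_sub_rev a]
          exact hy a ha'
        · have hax : a ≠ x := by
            intro h'; apply hxmem; rw [← h']; exact ha'
          have hbx : b ≠ x := by
            intro h'; apply hxmem; rw [← h']; exact hb'
          rw [Function.update_of_ne hax, Function.update_of_ne hbx]
          exact hLip a ha' b hb'

/-- Kirszbraun's theorem for a finite-dimensional real inner product space. -/
private lemma kirszbraun_full (L : ℝ) (hL : 0 ≤ L) (s : Set E) (hs : s.Nonempty) (f : E → E)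
    (hlip : ∀ a ∈ s, ∀ b ∈ s, ‖f a - f b‖ ≤ L * ‖a - b‖) :
    ∃ w : E → E, (∀ q ∈ s, w q = f q) ∧ ∀ a b : E, ‖w a - w b‖ ≤ L * ‖a - b‖ := by
  classical
  obtain ⟨q₀, hq₀⟩ := hs
  set K : Set (E → E) := Set.pi Set.univ (fun p => closedBall (f q₀) (L * ‖p - q₀‖)) with hK
  have hKcomp : IsCompact K := isCompact_univ_pi fun p => isCompact_closedBall _ _
  set C : (↥s ⊕ (E × E)) → Set (E → E) := fun i =>
    Sum.elim (fun q : ↥s => {w : E → E | w q = f q})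
      (fun pr : E × E => {w : E → E | ‖w pr.1 - w pr.2‖ ≤ L * ‖pr.1 - pr.2‖}) i with hC
  have hCclosed : ∀ i, IsClosed (C i) := by
    rintro (q | pr)
    · exact isClosed_singleton.preimage (continuous_apply (q : E))
    · exact isClosed_le (((continuous_apply pr.1).sub (continuous_apply pr.2)).norm)
        continuous_const
  have hFIP : ∀ u : Finset (↥s ⊕ (E × E)), (K ∩ ⋂ i ∈ u, C i).Nonempty := by
    intro u
    set pts : Finset E := u.biUnion (fun i => Sum.elim (fun _ => (∅ : Finset E))
      (fun pr => {pr.1, pr.2}) i) with hpts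
    obtain ⟨h, hEq, hLip⟩ := kirszbraun_finite_ext L hL s f hlip pts
    set w : E → E := fun p => if p ∈ s ∪ ↑pts then h p else f q₀ with hw
    have hwmem : ∀ p ∈ s ∪ ↑pts, w p = h p := by
      intro p hp; rw [hw]; simp only; rw [if_pos hp]
    refine ⟨w, ?_, ?_⟩
    · rw [hK, Set.mem_pi]
      intro p _
      rw [mem_closedBall, dist_eq_norm]
      by_cases hp : p ∈ s ∪ ↑pts
      · rw [hwmem p hp, ← hEq q₀ hq₀]
        exact hLip p hp q₀ (Set.mem_union_left _ hq₀)
      · rw [hw]; simp only; rw [if_neg hp, sub_self, norm_zero]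
        positivity
    · simp only [Set.mem_iInter]
      rintro (q | pr) hi
      · have hqs : (q : E) ∈ s := q.2
        show w q = f q
        rw [hwmem _ (Set.mem_union_left _ hqs)]
        exact hEq _ hqs
      · have h1 : pr.1 ∈ ↑pts := by
          rw [hpts]
          exact Finset.mem_biUnion.mpr ⟨Sum.inr pr, hi, by simp⟩
        have h2 : pr.2 ∈ ↑pts := by
          rw [hpts]
          exact Finset.mem_biUnion.mpr ⟨Sum.inr pr, hi, by simp⟩
        show ‖w pr.1 - w pr.2‖ ≤ L * ‖pr.1 - pr.2‖
        rw [hwmem _ (Set.mem_union_right _ h1), hwmem _ (Set.mem_union_right _ h2)]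
        exact hLip _ (Set.mem_union_right _ h1) _ (Set.mem_union_right _ h2)
  obtain ⟨w, _, hw2⟩ := hKcomp.inter_iInter_nonempty C hCclosed hFIP
  simp only [Set.mem_iInter] at hw2
  refine ⟨w, fun q hq => hw2 (Sum.inl ⟨q, hq⟩), fun a b => hw2 (Sum.inr (a, b))⟩

private lemma normalize_lip {c : ℝ} (hc : 0 < c) (a b : E) (ha : c ≤ ‖a‖) (hb : c ≤ ‖b‖) :
    ‖‖a‖⁻¹ • a - ‖b‖⁻¹ • b‖ ≤ (2 / c) * ‖a - b‖ := by
  have ha0 : 0 < ‖a‖ := lt_of_lt_of_le hc ha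
  have hb0 : 0 < ‖b‖ := lt_of_lt_of_le hc hb
  have key : ‖‖a‖⁻¹ • a - ‖b‖⁻¹ • b‖ ≤ ‖a‖⁻¹ * ‖a - b‖ + ‖a‖⁻¹ * ‖a - b‖ := by
    have h1 : ‖a‖⁻¹ • a - ‖b‖⁻¹ • b =
        (‖a‖⁻¹ • (a - b)) + ((‖a‖⁻¹ - ‖b‖⁻¹) • b) := by
      rw [smul_sub, sub_smul]; abel
    rw [h1]
    refine (norm_add_le _ _).trans ?_
    have h2 : ‖‖a‖⁻¹ • (a - b)‖ = ‖a‖⁻¹ * ‖a - b‖ := by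
      rw [norm_smul, Real.norm_eq_abs, abs_of_pos (by positivity)]
    have h3 : ‖(‖a‖⁻¹ - ‖b‖⁻¹) • b‖ ≤ ‖a‖⁻¹ * ‖a - b‖ := by
      rw [norm_smul, Real.norm_eq_abs]
      have h4 : ‖a‖⁻¹ - ‖b‖⁻¹ = (‖b‖ - ‖a‖) / (‖a‖ * ‖b‖) := by
        field_simp
      rw [h4, abs_div, abs_of_pos (by positivity : (0:ℝ) < ‖a‖ * ‖b‖)]
      have h5 : |‖b‖ - ‖a‖| ≤ ‖a - b‖ := by
        rw [norm_sub_rev]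
        exact abs_norm_sub_norm_le b a
      calc |‖b‖ - ‖a‖| / (‖a‖ * ‖b‖) * ‖b‖ = |‖b‖ - ‖a‖| / ‖a‖ := by
            field_simp
        _ ≤ ‖a - b‖ / ‖a‖ := by gcongr
        _ = ‖a‖⁻¹ * ‖a - b‖ := by field_simp
    linarith
  have h6 : ‖a‖⁻¹ ≤ c⁻¹ := by
    apply inv_anti₀ hc ha
  have h7 : ‖a‖⁻¹ * ‖a - b‖ ≤ c⁻¹ * ‖a - b‖ :=
    mul_le_mul_of_nonneg_right h6 (norm_nonneg _)
  calc ‖‖a‖⁻¹ • a - ‖b‖⁻¹ • b‖ ≤ ‖a‖⁻¹ * ‖a - b‖ + ‖a‖⁻¹ * ‖a - b‖ := key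
    _ ≤ c⁻¹ * ‖a - b‖ + c⁻¹ * ‖a - b‖ := by linarith
    _ = (2 / c) * ‖a - b‖ := by field_simp; ring


/-- Extension of Lipschitz unit vector fields (Euclidean model of Lemma 3.2): a unit
vector field that is `L`-Lipschitz on `s` extends to a `2L/(1 - Lδ)`-Lipschitz unit
vector field on any set `Ω` all of whose points lie within distance `δ < 1/L` of `s`. -/
theorem extension_of_unit_vector_field
    (n : ℕ) (s Ω : Set (EuclideanSpace ℝ (Fin n)))
    (hs : s.Nonempty) (hΩ : Ω.Nonempty)
    (L δ : ℝ) (hL : 0 < L) (hδ : 0 < δ) (hLδ : L * δ < 1)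
    (f : EuclideanSpace ℝ (Fin n) → EuclideanSpace ℝ (Fin n))
    (hf_lip : LipschitzOnWith (Real.toNNReal L) f s)
    (hf_unit : ∀ x ∈ s, ‖f x‖ = 1)
    (hnear : ∀ p ∈ Ω, ∃ q ∈ s, dist p q ≤ δ) :
    ∃ g : EuclideanSpace ℝ (Fin n) → EuclideanSpace ℝ (Fin n),
      LipschitzOnWith (Real.toNNReal (2 * L / (1 - L * δ))) g Ω ∧
      (∀ x ∈ Ω, ‖g x‖ = 1) ∧
      (∀ x ∈ s ∩ Ω, g x = f x) := by
  have hL0 : (0:ℝ) ≤ L := hL.le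
  -- pairwise Lipschitz bound from the hypothesis
  have hfl : ∀ a ∈ s, ∀ b ∈ s, ‖f a - f b‖ ≤ L * ‖a - b‖ := by
    intro a ha b hb
    have := hf_lip.dist_le_mul a ha b hb
    rwa [dist_eq_norm, dist_eq_norm, Real.coe_toNNReal L hL0] at this
  -- extend to a globally Lipschitz map
  obtain ⟨w, hwEq, hwLip⟩ := kirszbraun_full L hL0 s hs f hfl
  set c : ℝ := 1 - L * δ with hc
  have hc0 : 0 < c := by rw [hc]; linarith
  -- lower bound for the norm of w on Ω
  have hwlow : ∀ p ∈ Ω, c ≤ ‖w p‖ := by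
    intro p hp
    obtain ⟨q, hq, hdq⟩ := hnear p hp
    have h1 : ‖w p - f q‖ ≤ L * δ := by
      have h2 : ‖w p - w q‖ ≤ L * ‖p - q‖ := hwLip p q
      rw [hwEq q hq] at h2
      refine h2.trans ?_
      have : ‖p - q‖ ≤ δ := by rwa [← dist_eq_norm]
      nlinarith
    have h3 : (1:ℝ) - L * δ ≤ ‖w p‖ := by
      have h4 : ‖f q‖ - ‖w p‖ ≤ ‖w p - f q‖ := by
        rw [norm_sub_rev]
        calc ‖f q‖ - ‖w p‖ ≤ ‖f q - w p‖ := norm_sub_norm_le _ _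
          _ = ‖f q - w p‖ := rfl
      rw [hf_unit q hq] at h4
      linarith
    linarith [h3]
  have hwne : ∀ p ∈ Ω, ‖w p‖ ≠ 0 := fun p hp => ne_of_gt (lt_of_lt_of_le hc0 (hwlow p hp))
  refine ⟨fun p => ‖w p‖⁻¹ • w p, ?_, ?_, ?_⟩
  · rw [lipschitzOnWith_iff_dist_le_mul]
    intro p hp p' hp'
    rw [Real.coe_toNNReal _ (by positivity), dist_eq_norm, dist_eq_norm]
    have key := normalize_lip hc0 (w p) (w p') (hwlow p hp) (hwlow p' hp')
    have hwd : ‖w p - w p'‖ ≤ L * ‖p - p'‖ := hwLip p p'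
    calc ‖‖w p‖⁻¹ • w p - ‖w p'‖⁻¹ • w p'‖ ≤ (2 / c) * ‖w p - w p'‖ := key
      _ ≤ (2 / c) * (L * ‖p - p'‖) := by
          apply mul_le_mul_of_nonneg_left hwd (by positivity)
      _ = 2 * L / (1 - L * δ) * ‖p - p'‖ := by rw [hc]; field_simp
  · intro p hp
    rw [norm_smul, Real.norm_eq_abs, abs_of_pos (by
      have := lt_of_lt_of_le hc0 (hwlow p hp); positivity)]
    rw [inv_mul_cancel₀ (hwne p hp)]
  · rintro x ⟨hxs, hxΩ⟩
    show ‖w x‖⁻¹ • w x = f x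
    rw [hwEq x hxs, hf_unit x hxs]
    simp
end

section
/- Let n ≥ 2, let K ⊆ ℝⁿ be a compact convex set with nonempty interior, and let ε > 0. Set Γ^ε := frontier (cthickening ε K), the boundary of the outer parallel body of K at distance ε. Then every point x ∈ ℝⁿ with infDist(x, Γ^ε) < ε has a unique nearest point in Γ^ε: there exists a unique y ∈ Γ^ε with dist(x, y) = infDist(x, Γ^ε). -/
open Metric

open scoped RealInnerProductSpace

section Aux

variable {E : Type*} [NormedAddCommGroup E] [InnerProductSpace ℝ E]

lemma aux_le_infDist {α : Type*} [PseudoMetricSpace α] {s : Set α} (hs : s.Nonempty) {x : α}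
    {b : ℝ} (h : ∀ y ∈ s, b ≤ dist x y) : b ≤ infDist x s := by
  by_contra hb
  obtain ⟨y, hy, hlt⟩ := (infDist_lt_iff hs).1 (not_le.1 hb)
  exact absurd (h y hy) (not_le.2 hlt)

/-- Variational characterization of a nearest point in a convex set. -/
lemma aux_proj_inner {K : Set E} (hK : Convex ℝ K) {x q : E} (hq : q ∈ K)
    (hqd : infDist x K = dist x q) : ∀ k ∈ K, ⟪x - q, k - q⟫ ≤ 0 := by
  rw [← norm_eq_iInf_iff_real_inner_le_zero hK hq]
  rw [infDist_eq_iInf] at hqd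
  simp only [dist_eq_norm] at hqd
  exact hqd.symm

/-- Points on the ray from the projection through `x` have the same projection. -/
lemma aux_ray_infDist {K : Set E} {x q : E} (hq : q ∈ K)
    (hinner : ∀ k ∈ K, ⟪x - q, k - q⟫ ≤ 0) {c : ℝ} (hc : 0 ≤ c) :
    infDist (q + c • (x - q)) K = c * ‖x - q‖ := by
  set z := q + c • (x - q) with hz
  have hzq : dist z q = c * ‖x - q‖ := by
    simp [hz, dist_eq_norm, norm_smul, abs_of_nonneg hc]
  refine le_antisymm (hzq ▸ infDist_le_dist_of_mem hq) (aux_le_infDist ⟨q, hq⟩ ?_)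
  intro k hk
  have h1 : ⟪z - q, k - q⟫ ≤ 0 := by
    have : z - q = c • (x - q) := by simp [hz]
    rw [this, real_inner_smul_left]
    exact mul_nonpos_of_nonneg_of_nonpos hc (hinner k hk)
  have h2 : ‖z - q‖ ^ 2 ≤ ‖z - k‖ ^ 2 := by
    have := norm_sub_sq_real (z - q) (k - q)
    have he : (z - q) - (k - q) = z - k := by abel
    rw [he] at this
    nlinarith [sq_nonneg ‖k - q‖]
  have h3 : ‖z - q‖ ≤ ‖z - k‖ := by
    nlinarith [norm_nonneg (z - q), norm_nonneg (z - k)]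
  calc c * ‖x - q‖ = dist z q := hzq.symm
    _ ≤ dist z k := by rw [dist_eq_norm, dist_eq_norm]; exact h3
    _ = dist _ k := rfl

/-- Uniqueness of nearest points in a convex set. -/
lemma aux_proj_unique {K : Set E} (hK : Convex ℝ K) {x q p : E} (hq : q ∈ K) (hp : p ∈ K)
    (hqd : infDist x K = dist x q) (hpd : infDist x K = dist x p) : q = p := by
  have h1 := aux_proj_inner hK hq hqd p hp
  have h2 := aux_proj_inner hK hp hpd q hq
  have key : ‖p - q‖ ^ 2 ≤ 0 := by
    have e1 : ⟪x - q, p - q⟫ - ⟪x - p, p - q⟫ = ⟪p - q, p - q⟫ := by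
      rw [← inner_sub_left]
      congr 1
      abel
    have e2 : ⟪x - p, q - p⟫ = - ⟪x - p, p - q⟫ := by
      rw [← inner_neg_right]
      congr 1
      abel
    rw [e2] at h2
    have : ⟪p - q, p - q⟫ ≤ 0 := by rw [← e1]; linarith
    rwa [real_inner_self_eq_norm_sq] at this
  have : ‖p - q‖ = 0 := by nlinarith [norm_nonneg (p - q)]
  have := norm_sub_eq_zero_iff.1 this
  exact this.symm

end Aux

/-- The boundary `Γ^ε` of the outer parallel body of a compact convex body `K ⊆ ℝⁿ`
at distance `ε > 0` has reach at least `ε`: every point at distance less than `ε` from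
`Γ^ε` has a unique nearest point in `Γ^ε`. -/
theorem parallel_hypersurface_unique_nearest_point
    (n : ℕ) (hn : 2 ≤ n)
    (K : Set (EuclideanSpace ℝ (Fin n)))
    (hK_cpt : IsCompact K) (hK_conv : Convex ℝ K) (hK_int : (interior K).Nonempty)
    (ε : ℝ) (hε : 0 < ε)
    (x : EuclideanSpace ℝ (Fin n))
    (hx : infDist x (frontier (cthickening ε K)) < ε) :
    ∃! y, y ∈ frontier (cthickening ε K) ∧
      dist x y = infDist x (frontier (cthickening ε K)) := by
  classical
  have hKne : K.Nonempty := hK_int.mono interior_subset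
  have hKcl : IsClosed K := hK_cpt.isClosed
  set Γ : Set (EuclideanSpace ℝ (Fin n)) := frontier (cthickening ε K) with hΓ
  -- membership in the closed thickening in terms of `infDist`
  have hmemC : ∀ z : EuclideanSpace ℝ (Fin n), z ∈ cthickening ε K ↔ infDist z K ≤ ε := by
    intro z
    rw [mem_cthickening_iff, ENNReal.le_ofReal_iff_toReal_le (infEdist_ne_top hKne) hε.le]
    exact Iff.rfl
  -- characterization of the frontier
  have hΓ_sub : ∀ z ∈ Γ, infDist z K = ε := by
    intro z hz
    have := frontier_cthickening_subset K (δ := ε) hz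
    have : (Metric.infEDist z K).toReal = (ENNReal.ofReal ε).toReal := by rw [this]
    rwa [ENNReal.toReal_ofReal hε.le] at this
  have hΓ_mem : ∀ z : EuclideanSpace ℝ (Fin n), infDist z K = ε → z ∈ Γ := by
    intro z hzd
    obtain ⟨q, hqK, hqd⟩ := hK_cpt.exists_infDist_eq_dist hKne z
    have hinner := aux_proj_inner hK_conv hqK hqd
    have hzq : ‖z - q‖ = ε := by rw [← dist_eq_norm, ← hqd, hzd]
    constructor
    · exact subset_closure ((hmemC z).2 hzd.le)
    · -- z is not in the interior
      intro hzint
      obtain ⟨r, hr, hball⟩ := Metric.isOpen_iff.1 isOpen_interior z hzint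
      set c : ℝ := 1 + r / (2 * ε) with hc
      clear_value c
      have hc1 : (1:ℝ) ≤ c := by
        have : 0 < r / (2 * ε) := div_pos hr (by linarith)
        linarith
      set w : EuclideanSpace ℝ (Fin n) := q + c • (z - q) with hw
      have hwd : infDist w K = c * ε := by
        rw [aux_ray_infDist hqK hinner (by linarith), hzq]
      have hwz : dist w z = (c - 1) * ε := by
        have : w - z = (c - 1) • (z - q) := by
          rw [hw, sub_smul, one_smul]
          abel
        rw [dist_eq_norm, this, norm_smul, hzq, Real.norm_eq_abs,
          abs_of_nonneg (by linarith : (0:ℝ) ≤ c - 1)]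
      have hwball : w ∈ Metric.ball z r := by
        rw [mem_ball, hwz, hc]
        have hεne : (2 * ε) ≠ 0 := by positivity
        have : (1 + r / (2 * ε) - 1) * ε = r / 2 := by field_simp; ring
        rw [this]
        linarith
      have hwC : w ∈ cthickening ε K := interior_subset (hball hwball)
      have : infDist w K ≤ ε := (hmemC w).1 hwC
      rw [hwd] at this
      have hc2 : 1 < c := by
        have h0 : 0 < r / (2 * ε) := div_pos hr (by linarith)
        rw [hc]; linarith
      linarith [mul_lt_mul_of_pos_right hc2 hε]
  -- Γ is nonempty
  have hΓne : Γ.Nonempty := by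
    obtain ⟨a, ha⟩ := id hKne
    have hfin : Fin n := ⟨0, by omega⟩
    set u : EuclideanSpace ℝ (Fin n) := EuclideanSpace.single hfin (1:ℝ) with hu
    have hnu : ‖u‖ = 1 := by simp [hu]
    have hcont : Continuous fun t : ℝ => infDist (a + t • u) K := by
      have h0 : Continuous fun t : ℝ => a + t • u := by continuity
      exact (continuous_infDist_pt K).comp h0
    have hdiam : 0 ≤ diam K := diam_nonneg
    set T : ℝ := ε + diam K + 1 with hT
    clear_value T
    have hTpos : 0 < T := by rw [hT]; linarith
    have hf0 : infDist (a + (0:ℝ) • u) K = 0 := by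
      rw [zero_smul, add_zero]
      exact (hKcl.mem_iff_infDist_zero hKne).1 ha
    have hfT : ε ≤ infDist (a + T • u) K := by
      apply aux_le_infDist hKne
      intro k hk
      have h1 : dist (a + T • u) a = T := by
        rw [dist_eq_norm, add_sub_cancel_left, norm_smul, hnu, Real.norm_eq_abs,
          abs_of_nonneg hTpos.le, mul_one]
      have h2 : dist a k ≤ diam K := dist_le_diam_of_mem hK_cpt.isBounded ha hk
      have h3 := dist_triangle (a + T • u) a k
      rw [h1] at h3
      have h4 := dist_triangle (a + T • u) k a
      rw [dist_comm a k] at h2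
      rw [hT] at h3
      linarith [dist_comm k a ▸ h2]
    have hIVT : ε ∈ Set.Icc (infDist (a + (0:ℝ) • u) K) (infDist (a + T • u) K) := by
      rw [hf0]
      exact ⟨hε.le, hfT⟩
    obtain ⟨t, _, htf⟩ := intermediate_value_Icc hTpos.le
      (Continuous.continuousOn hcont) hIVT
    exact ⟨a + t • u, hΓ_mem _ htf⟩
  -- basic bounds on d := infDist x K
  set d : ℝ := infDist x K with hd
  obtain ⟨z₀, hz₀Γ, hz₀d⟩ := (infDist_lt_iff hΓne).1 hx
  have hz₀K : infDist z₀ K = ε := hΓ_sub z₀ hz₀Γ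
  have hd_lt : d < 2 * ε := by
    have := infDist_le_infDist_add_dist (x := x) (y := z₀) (s := K)
    rw [hz₀K] at this
    rw [hd]; linarith
  have hd_pos : 0 < d := by
    have := infDist_le_infDist_add_dist (x := z₀) (y := x) (s := K)
    rw [hz₀K, dist_comm] at this
    rw [hd]; linarith
  -- the projection of x onto K
  obtain ⟨q, hqK, hqd⟩ := hK_cpt.exists_infDist_eq_dist hKne x
  have hinner := aux_proj_inner hK_conv hqK hqd
  have hxq : ‖x - q‖ = d := by rw [← dist_eq_norm, ← hqd]
  have hxq0 : x - q ≠ 0 := by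
    intro h
    rw [h, norm_zero] at hxq
    linarith
  -- the candidate nearest point
  set y : EuclideanSpace ℝ (Fin n) := q + (ε / d) • (x - q) with hy
  have hcd : 0 ≤ ε / d := by positivity
  have hyK : infDist y K = ε := by
    rw [hy, aux_ray_infDist hqK hinner hcd, hxq]
    field_simp
  have hyΓ : y ∈ Γ := hΓ_mem y hyK
  have hxy : dist x y = |d - ε| := by
    have hxyeq : x - y = (1 - ε / d) • (x - q) := by
      rw [hy, sub_smul, one_smul]
      abel
    rw [dist_eq_norm, hxyeq, norm_smul, hxq, Real.norm_eq_abs]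
    have h1 : |1 - ε / d| * d = |(1 - ε / d) * d| := by
      rw [abs_mul, abs_of_pos hd_pos]
    have h2 : (1 - ε / d) * d = d - ε := by field_simp
    rw [h1, h2]
  -- the distance from x to Γ
  have hΓdist : infDist x Γ = |d - ε| := by
    refine le_antisymm (hxy ▸ infDist_le_dist_of_mem hyΓ) (aux_le_infDist hΓne ?_)
    intro z hzΓ
    have hz := hΓ_sub z hzΓ
    have h1 := infDist_le_infDist_add_dist (x := x) (y := z) (s := K)
    have h2 := infDist_le_infDist_add_dist (x := z) (y := x) (s := K)
    rw [hz] at h1 h2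
    rw [dist_comm z x] at h2
    rw [abs_sub_le_iff]
    constructor <;> [skip; skip] <;> [linarith; linarith]
  refine ⟨y, ⟨hyΓ, by rw [hxy, hΓdist]⟩, ?_⟩
  rintro z ⟨hzΓ, hzdist⟩
  have hzK : infDist z K = ε := hΓ_sub z hzΓ
  have hdxz : dist x z = |d - ε| := by rw [hzdist, hΓdist]
  rcases le_or_gt d ε with hcase | hcase
  · -- `x` lies between `q` and the boundary (inside the thickening)
    have habs : |d - ε| = ε - d := by rw [abs_of_nonpos (by linarith)]; ring
    rw [habs] at hdxz
    have hqz_le : dist q z ≤ ε := by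
      calc dist q z ≤ dist q x + dist x z := dist_triangle q x z
        _ = d + (ε - d) := by rw [dist_comm q x, ← hqd, hdxz]
        _ = ε := by ring
    have hqz_ge : ε ≤ dist q z := by
      have := infDist_le_dist_of_mem (x := z) hqK
      rw [hzK, dist_comm z q] at this
      exact this
    have hqz : dist q z = ε := le_antisymm hqz_le hqz_ge
    have heq : dist q x + dist x z = dist q z := by
      rw [dist_comm q x, ← hqd, hdxz, hqz]; ring
    have hW : Wbtw ℝ q x z := dist_add_dist_eq_iff.1 heq
    obtain ⟨a, b, ha, hb, hab, hsum⟩ := mem_segment_iff_wbtw.2 hW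
    have hxq_eq : x - q = b • (z - q) := by
      have haa : a = 1 - b := by linarith
      rw [← hsum, haa]
      module
    have hbd : b * ε = d := by
      have : ‖x - q‖ = b * ‖z - q‖ := by
        rw [hxq_eq, norm_smul, Real.norm_eq_abs, abs_of_nonneg hb]
      rw [hxq, ← dist_eq_norm, dist_comm z q, hqz] at this
      linarith
    have hbval : b = d / ε := by rw [← hbd, mul_div_assoc, div_self hε.ne', mul_one]
    have hkey : (ε / d) • (x - q) = z - q := by
      rw [hxq_eq, smul_smul, hbval]
      have : ε / d * (d / ε) = 1 := by field_simp
      rw [this, one_smul]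
    rw [hy, hkey]
    abel
  · -- `x` lies beyond the boundary (outside the thickening)
    have habs : |d - ε| = d - ε := abs_of_pos (by linarith)
    rw [habs] at hdxz
    obtain ⟨p, hpK, hpd⟩ := hK_cpt.exists_infDist_eq_dist hKne z
    have hzp : dist z p = ε := by rw [← hpd, hzK]
    have hxp : dist x p = d := by
      refine le_antisymm ?_ ?_
      · calc dist x p ≤ dist x z + dist z p := dist_triangle x z p
          _ = (d - ε) + ε := by rw [hdxz, hzp]
          _ = d := by ring
      · have := infDist_le_dist_of_mem (x := x) hpK
        rw [← hd] at this
        linarith [this]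
    have hpq : q = p := aux_proj_unique hK_conv hqK hpK hqd (by rw [hxp])
    have hzq : dist z q = ε := by rw [hpq]; exact hzp
    have heq : dist x z + dist z q = dist x q := by
      rw [hdxz, hzq, ← hqd]; ring
    have hW : Wbtw ℝ x z q := dist_add_dist_eq_iff.1 heq
    obtain ⟨a, b, ha, hb, hab, hsum⟩ := mem_segment_iff_wbtw.2 hW
    have hzx_eq : z - x = b • (q - x) := by
      have haa : a = 1 - b := by linarith
      rw [← hsum, haa]
      module
    have hbd : b * d = d - ε := by
      have : ‖z - x‖ = b * ‖q - x‖ := by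
        rw [hzx_eq, norm_smul, Real.norm_eq_abs, abs_of_nonneg hb]
      rw [← dist_eq_norm, ← dist_eq_norm, dist_comm z x, hdxz, dist_comm q x, ← hqd] at this
      linarith
    have hbval : b = (d - ε) / d := by rw [← hbd, mul_div_assoc, div_self hd_pos.ne', mul_one]
    have hyx_eq : y - x = ((d - ε) / d) • (q - x) := by
      have hdd : (d - ε) / d = 1 - ε / d := by field_simp
      rw [hy, hdd]
      module
    have heq2 : z - x = y - x := by rw [hzx_eq, hbval, hyx_eq]
    exact sub_left_injective heq2
end
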